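/- arXiv:2507.09832 — 4 statements merged into one kernel-verified Lean document; each statement's English description precedes it below -/
import Mathlib

section
/- Let k ≥ 1 and t ≥ 2 be integers, let n ≥ max{12tk + 2k, 4tk^2}, and set N = 2n + t − 2. Suppose the edges of the complete graph K_N are colored red and blue so that there is no red copy of the star K_{1,n−1} and no blue copy of tF_k. Let A be the vertex set of a blue copy of (t−1)F_k in K_N and let S = V(K_N) \ A. Then for every vertex v ∈ S, the number of blue neighbors of v inside S satisfies n − 2kt + 2k ≤ |N_B(v) ∩ S| ≤ n + k − 2. -/
open SimpleGraph

/-- `host.ContainsCopy G` means that `host` contains a (not necessarily induced) subgraph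
isomorphic to `G`. -/
def SimpleGraph.ContainsCopy {β α : Type*} (host : SimpleGraph β) (G : SimpleGraph α) : Prop :=
  ∃ f : α → β, Function.Injective f ∧ ∀ ⦃a b : α⦄, G.Adj a b → host.Adj (f a) (f b)

/-- `ramseyProp G H N` means: for every red-blue coloring of the edges of the complete graph
on `N` vertices (given by its red graph `red`, the blue graph being the complement `redᶜ`),
there is a red copy of `G` or a blue copy of `H`. -/
def ramseyProp {α β : Type*} (G : SimpleGraph α) (H : SimpleGraph β) (N : ℕ) : Prop :=
  ∀ red : SimpleGraph (Fin N), red.ContainsCopy G ∨ (redᶜ).ContainsCopy H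

/-- The Ramsey number `r(G, H)`: the least `N` with the Ramsey property. -/
noncomputable def ramseyNumber {α β : Type*} (G : SimpleGraph α) (H : SimpleGraph β) : ℕ :=
  sInf {N | ramseyProp G H N}

/-- The fan `F_k = K_1 + k·K_2`: `k` triangles sharing exactly one common vertex (`none`). -/
def fan (k : ℕ) : SimpleGraph (Option (Fin k × Fin 2)) :=
  SimpleGraph.fromRel (fun x y => x = none ∨ ∃ i a b, x = some (i, a) ∧ y = some (i, b))

/-- `copies t G` is the disjoint union of `t` copies of `G`. -/
def copies {α : Type*} (t : ℕ) (G : SimpleGraph α) : SimpleGraph (Fin t × α) where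
  Adj x y := x.1 = y.1 ∧ G.Adj x.2 y.2
  symm := ⟨fun _ _ h => ⟨h.1.symm, h.2.symm⟩⟩
  loopless := ⟨fun x h => G.loopless.irrefl x.2 h.2⟩

open Finset in
lemma matching_lemma {V : Type*} [DecidableEq V] (G : SimpleGraph V)
    [DecidableRel G.Adj] (T : Finset V) (k : ℕ)
    (hdeg : ∀ u ∈ T, k ≤ (T.filter (fun z => G.Adj u z)).card)
    (hcard : 2 * k ≤ T.card) :
    ∃ p : Fin k → V × V,
      (∀ i, (p i).1 ∈ T ∧ (p i).2 ∈ T ∧ G.Adj (p i).1 (p i).2) ∧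
      (∀ i j, i ≠ j → (p i).1 ≠ (p j).1 ∧ (p i).1 ≠ (p j).2 ∧
        (p i).2 ≠ (p j).1 ∧ (p i).2 ≠ (p j).2) := by
  suffices H : ∀ j : ℕ, j ≤ k → ∃ p : Fin j → V × V,
      (∀ i, (p i).1 ∈ T ∧ (p i).2 ∈ T ∧ G.Adj (p i).1 (p i).2) ∧
      (∀ i i', i ≠ i' → (p i).1 ≠ (p i').1 ∧ (p i).1 ≠ (p i').2 ∧
        (p i).2 ≠ (p i').1 ∧ (p i).2 ≠ (p i').2) by exact H k le_rfl
  intro j hj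
  induction j with
  | zero => exact ⟨fun i => i.elim0, fun i => i.elim0, fun i i' => i.elim0⟩
  | succ j ih =>
    obtain ⟨p, hp1, hp2⟩ := ih (Nat.le_of_succ_le hj)
    have hpne : ∀ m : Fin j, (p m).1 ≠ (p m).2 := fun m => (hp1 m).2.2.ne
    set E : Finset V := univ.biUnion (fun i : Fin j => ({(p i).1, (p i).2} : Finset V)) with hEdef
    have hpairE : ∀ m : Fin j, (p m).1 ∈ E ∧ (p m).2 ∈ E := by
      intro m
      constructor <;> exact mem_biUnion.mpr ⟨m, mem_univ m, by simp⟩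
    have hE : E.card ≤ 2 * j := by
      calc E.card ≤ ∑ i : Fin j, ({(p i).1, (p i).2} : Finset V).card := card_biUnion_le
        _ ≤ ∑ _i : Fin j, 2 := by
            apply Finset.sum_le_sum
            intro i _
            exact (card_insert_le _ _).trans (by simp)
        _ = 2 * j := by simp [mul_comm]
    have hTE : T.card ≤ (T \ E).card + E.card := by
      rw [Finset.card_sdiff_add_card]
      exact card_le_card subset_union_left
    set W : Finset V := T \ E with hWdef
    have hWT : W ⊆ T := sdiff_subset
    have hWE : ∀ z ∈ W, z ∉ E := fun z hz => (mem_sdiff.mp hz).2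
    have hW : 2 ≤ W.card := by omega
    obtain ⟨u, hu, w, hw, huw⟩ := Finset.one_lt_card.mp (by omega : 1 < W.card)
    by_cases hedge : ∃ a ∈ W, ∃ b ∈ W, G.Adj a b
    · obtain ⟨a, ha, b, hb, hab⟩ := hedge
      have haE := hWE a ha
      have hbE := hWE b hb
      refine ⟨Fin.snoc p (a, b), ?_, ?_⟩
      · intro i
        refine Fin.lastCases ?_ ?_ i
        · simp only [Fin.snoc_last]
          exact ⟨hWT ha, hWT hb, hab⟩
        · intro m; simpa using hp1 m
      · intro i i'
        induction i using Fin.lastCases with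
        | last =>
          induction i' using Fin.lastCases with
          | last => intro hne; exact absurd rfl hne
          | cast m' =>
            intro _
            simp only [Fin.snoc_last, Fin.snoc_castSucc]
            have hm' := hpairE m'
            refine ⟨?_, ?_, ?_, ?_⟩ <;> intro h
            · exact haE (by rw [h]; exact hm'.1)
            · exact haE (by rw [h]; exact hm'.2)
            · exact hbE (by rw [h]; exact hm'.1)
            · exact hbE (by rw [h]; exact hm'.2)
        | cast m =>
          induction i' using Fin.lastCases with
          | last =>
            intro _
            simp only [Fin.snoc_last, Fin.snoc_castSucc]
            have hm := hpairE m
            refine ⟨?_, ?_, ?_, ?_⟩ <;> intro h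
            · exact haE (by rw [← h]; exact hm.1)
            · exact hbE (by rw [← h]; exact hm.1)
            · exact haE (by rw [← h]; exact hm.2)
            · exact hbE (by rw [← h]; exact hm.2)
          | cast m' =>
            intro hne
            simp only [Fin.snoc_castSucc]
            exact hp2 m m' (fun h => hne (by rw [h]))
    · push_neg at hedge
      have hsub : ∀ x ∈ W, T.filter (fun z => G.Adj x z) ⊆ E := by
        intro x hx z hz
        rw [mem_filter] at hz
        by_contra hzE
        exact hedge x hx z (mem_sdiff.mpr ⟨hz.1, hzE⟩) hz.2
      have hcount : ∀ x ∈ W, (j : ℕ) + 1 ≤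
          ∑ i : Fin j, ((T.filter (fun z => G.Adj x z)) ∩ {(p i).1, (p i).2}).card := by
        intro x hx
        have h1 : T.filter (fun z => G.Adj x z) ⊆
            univ.biUnion (fun i : Fin j =>
              (T.filter (fun z => G.Adj x z)) ∩ ({(p i).1, (p i).2} : Finset V)) := by
          intro z hz
          have := hsub x hx hz
          rw [hEdef, mem_biUnion] at this
          obtain ⟨i, _, hi⟩ := this
          exact mem_biUnion.mpr ⟨i, mem_univ i, mem_inter.mpr ⟨hz, hi⟩⟩
        calc (j:ℕ)+1 ≤ k := hj
          _ ≤ (T.filter (fun z => G.Adj x z)).card := hdeg x (hWT hx)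
          _ ≤ _ := (card_le_card h1).trans card_biUnion_le
      have hbig : ∃ i : Fin j,
          3 ≤ ((T.filter (fun z => G.Adj u z)) ∩ {(p i).1, (p i).2}).card +
              ((T.filter (fun z => G.Adj w z)) ∩ {(p i).1, (p i).2}).card := by
        by_contra hcon
        push_neg at hcon
        have : ∑ i : Fin j, (((T.filter (fun z => G.Adj u z)) ∩ {(p i).1, (p i).2}).card +
            ((T.filter (fun z => G.Adj w z)) ∩ {(p i).1, (p i).2}).card) ≤ 2 * j := by
          calc _ ≤ ∑ _i : Fin j, 2 := Finset.sum_le_sum (fun i _ => by have := hcon i; omega)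
            _ = 2 * j := by simp [mul_comm]
        rw [Finset.sum_add_distrib] at this
        have h1 := hcount u hu
        have h2 := hcount w hw
        omega
      obtain ⟨i, hi3⟩ := hbig
      obtain ⟨hxT, hyT, hadjxy⟩ := hp1 i
      have hxy : (p i).1 ≠ (p i).2 := hadjxy.ne
      have hcard2 : ({(p i).1, (p i).2} : Finset V).card = 2 := by
        rw [card_insert_of_notMem (by simp [hxy]), card_singleton]
      have hle : ∀ q : V,
          ((T.filter (fun z => G.Adj q z)) ∩ {(p i).1, (p i).2}).card ≤ 2 :=
        fun q => (card_le_card inter_subset_right).trans (le_of_eq hcard2)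
      have hfull : ∀ q : V, 2 ≤ ((T.filter (fun z => G.Adj q z)) ∩ {(p i).1, (p i).2}).card →
          G.Adj q (p i).1 ∧ G.Adj q (p i).2 := by
        intro q hq
        have heq : (T.filter (fun z => G.Adj q z)) ∩ {(p i).1, (p i).2}
            = {(p i).1, (p i).2} :=
          Finset.eq_of_subset_of_card_le inter_subset_right (by rw [hcard2]; exact hq)
        have h1 : (p i).1 ∈ (T.filter (fun z => G.Adj q z)) ∩ {(p i).1, (p i).2} := by
          rw [heq]; simp
        have h2 : (p i).2 ∈ (T.filter (fun z => G.Adj q z)) ∩ {(p i).1, (p i).2} := by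
          rw [heq]; simp
        exact ⟨(mem_filter.mp (mem_inter.mp h1).1).2, (mem_filter.mp (mem_inter.mp h2).1).2⟩
      have hone : ∀ q : V, 1 ≤ ((T.filter (fun z => G.Adj q z)) ∩ {(p i).1, (p i).2}).card →
          G.Adj q (p i).1 ∨ G.Adj q (p i).2 := by
        intro q hq
        obtain ⟨z, hz⟩ := Finset.card_pos.mp (lt_of_lt_of_le one_pos hq)
        obtain ⟨hz1, hz2⟩ := mem_inter.mp hz
        have hadj := (mem_filter.mp hz1).2
        rcases mem_insert.mp hz2 with h | h
        · left; rw [← h]; exact hadj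
        · right; rw [← mem_singleton.mp h]; exact hadj
      have key : ∃ α β : V,
          (α = (p i).1 ∧ β = (p i).2 ∨ α = (p i).2 ∧ β = (p i).1) ∧
          G.Adj u α ∧ G.Adj w β := by
        have hleu := hle u
        have hlew := hle w
        have h2or : 2 ≤ ((T.filter (fun z => G.Adj u z)) ∩ {(p i).1, (p i).2}).card ∨
            2 ≤ ((T.filter (fun z => G.Adj w z)) ∩ {(p i).1, (p i).2}).card := by omega
        have h1u : 1 ≤ ((T.filter (fun z => G.Adj u z)) ∩ {(p i).1, (p i).2}).card := by omega
        have h1w : 1 ≤ ((T.filter (fun z => G.Adj w z)) ∩ {(p i).1, (p i).2}).card := by omega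
        rcases h2or with h2 | h2
        · obtain ⟨hux, huy⟩ := hfull u h2
          rcases hone w h1w with h | h
          · exact ⟨(p i).2, (p i).1, Or.inr ⟨rfl, rfl⟩, huy, h⟩
          · exact ⟨(p i).1, (p i).2, Or.inl ⟨rfl, rfl⟩, hux, h⟩
        · obtain ⟨hwx, hwy⟩ := hfull w h2
          rcases hone u h1u with h | h
          · exact ⟨(p i).1, (p i).2, Or.inl ⟨rfl, rfl⟩, h, hwy⟩
          · exact ⟨(p i).2, (p i).1, Or.inr ⟨rfl, rfl⟩, h, hwx⟩
      obtain ⟨α, β, hαβ, huα, hwβ⟩ := key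
      have hαE : α ∈ E := by
        rcases hαβ with ⟨h, _⟩ | ⟨h, _⟩
        · rw [h]; exact (hpairE i).1
        · rw [h]; exact (hpairE i).2
      have hβE : β ∈ E := by
        rcases hαβ with ⟨_, h⟩ | ⟨_, h⟩
        · rw [h]; exact (hpairE i).2
        · rw [h]; exact (hpairE i).1
      have hαT : α ∈ T := by
        rcases hαβ with ⟨h, _⟩ | ⟨h, _⟩
        · rw [h]; exact hxT
        · rw [h]; exact hyT
      have hβT : β ∈ T := by
        rcases hαβ with ⟨_, h⟩ | ⟨_, h⟩
        · rw [h]; exact hyT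
        · rw [h]; exact hxT
      have hαβne : α ≠ β := by
        rcases hαβ with ⟨h1, h2⟩ | ⟨h1, h2⟩
        · rw [h1, h2]; exact hxy
        · rw [h1, h2]; exact hxy.symm
      have hdisj : ∀ m : Fin j, m ≠ i → ∀ γ : V, (γ = α ∨ γ = β) →
          γ ≠ (p m).1 ∧ γ ≠ (p m).2 := by
        intro m hm γ hγ
        have hd := hp2 i m (fun h => hm h.symm)
        have hγxy : γ = (p i).1 ∨ γ = (p i).2 := by
          rcases hγ with h | h <;> rcases hαβ with ⟨h1, h2⟩ | ⟨h1, h2⟩ <;> subst h <;> tauto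
        rcases hγxy with h | h <;> rw [h]
        · exact ⟨hd.1, hd.2.1⟩
        · exact ⟨hd.2.2.1, hd.2.2.2⟩
      set q : Fin (j+1) → V × V := Fin.snoc (Function.update p i (u, α)) (w, β) with hqdef
      have hq_cast : ∀ m : Fin j, q m.castSucc = if m = i then (u, α) else p m := by
        intro m
        rw [hqdef, Fin.snoc_castSucc]
        by_cases h : m = i
        · rw [if_pos h, h, Function.update_self]
        · rw [if_neg h, Function.update_of_ne h]
      have hq_last : q (Fin.last j) = (w, β) := by rw [hqdef, Fin.snoc_last]
      have huE := hWE u hu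
      have hwE := hWE w hw
      have hnew_old : ∀ m'' : Fin j, m'' ≠ i →
          (u ≠ (p m'').1 ∧ u ≠ (p m'').2 ∧ α ≠ (p m'').1 ∧ α ≠ (p m'').2) ∧
          (w ≠ (p m'').1 ∧ w ≠ (p m'').2 ∧ β ≠ (p m'').1 ∧ β ≠ (p m'').2) := by
        intro m'' hm''
        have h1 := hdisj m'' hm'' α (Or.inl rfl)
        have h2 := hdisj m'' hm'' β (Or.inr rfl)
        have hpm := hpairE m''
        refine ⟨⟨?_, ?_, h1.1, h1.2⟩, ⟨?_, ?_, h2.1, h2.2⟩⟩ <;> intro h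
        · exact huE (by rw [h]; exact hpm.1)
        · exact huE (by rw [h]; exact hpm.2)
        · exact hwE (by rw [h]; exact hpm.1)
        · exact hwE (by rw [h]; exact hpm.2)
      have hnew_new : u ≠ w ∧ u ≠ β ∧ α ≠ w ∧ α ≠ β := by
        refine ⟨huw, ?_, ?_, hαβne⟩ <;> intro h
        · exact huE (by rw [h]; exact hβE)
        · exact hwE (by rw [← h]; exact hαE)
      refine ⟨q, ?_, ?_⟩
      · intro m
        refine Fin.lastCases ?_ ?_ m
        · rw [hq_last]; exact ⟨hWT hw, hβT, hwβ⟩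
        · intro m'
          rw [hq_cast]
          by_cases h : m' = i
          · rw [if_pos h]
            exact ⟨hWT hu, hαT, huα⟩
          · rw [if_neg h]; exact hp1 m'
      · intro m m'
        induction m using Fin.lastCases with
        | last =>
          induction m' using Fin.lastCases with
          | last => intro hne; exact absurd rfl hne
          | cast a' =>
            intro _
            rw [hq_last, hq_cast]
            by_cases h : a' = i
            · rw [if_pos h]
              exact ⟨hnew_new.1.symm, hnew_new.2.2.1.symm, hnew_new.2.1.symm,
                hnew_new.2.2.2.symm⟩
            · obtain ⟨_, h2⟩ := hnew_old a' h
              rw [if_neg h]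
              exact h2
        | cast a =>
          induction m' using Fin.lastCases with
          | last =>
            intro _
            rw [hq_last, hq_cast]
            by_cases h : a = i
            · rw [if_pos h]
              exact hnew_new
            · obtain ⟨_, h2⟩ := hnew_old a h
              rw [if_neg h]
              exact ⟨h2.1.symm, h2.2.2.1.symm, h2.2.1.symm, h2.2.2.2.symm⟩
          | cast a' =>
            intro hne
            have haa' : a ≠ a' := fun h => hne (by rw [h])
            rw [hq_cast, hq_cast]
            by_cases h : a = i <;> by_cases h' : a' = i
            · exact absurd (h.trans h'.symm) haa'
            · obtain ⟨h1, _⟩ := hnew_old a' h'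
              rw [if_pos h, if_neg h']
              exact h1
            · obtain ⟨h1, _⟩ := hnew_old a h
              rw [if_neg h, if_pos h']
              exact ⟨h1.1.symm, h1.2.2.1.symm, h1.2.1.symm, h1.2.2.2.symm⟩
            · rw [if_neg h, if_neg h']
              exact hp2 a a' haa'

/-- Claim 1 in the proof of Theorem 6: in a red-blue coloring of `K_N`, `N = 2n + t − 2`,
with no red `K_{1,n−1}` and no blue `tF_k`, if `A` is the vertex set of a blue `(t−1)F_k`
and `S` is its complement, then every `v ∈ S` has `n − 2kt + 2k ≤ |N_B(v) ∩ S| ≤ n + k − 2`. -/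
theorem blue_degree_in_S (k t n N : ℕ) (hk : 1 ≤ k) (ht : 2 ≤ t)
    (hn1 : 12 * t * k + 2 * k ≤ n) (hn2 : 4 * t * k ^ 2 ≤ n)
    (hN : N = 2 * n + t - 2)
    (R : SimpleGraph (Fin N))
    (hred : ¬ R.ContainsCopy (completeBipartiteGraph (Fin 1) (Fin (n - 1))))
    (hblue : ¬ (Rᶜ).ContainsCopy (copies t (fan k)))
    (f : Fin (t - 1) × Option (Fin k × Fin 2) → Fin N)
    (hf_inj : Function.Injective f)
    (hf_adj : ∀ ⦃a b⦄, (copies (t - 1) (fan k)).Adj a b → (Rᶜ).Adj (f a) (f b))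
    (A S : Set (Fin N)) (hA : A = Set.range f) (hS : S = Aᶜ) :
    ∀ v ∈ S,
      ((n : ℤ) - 2 * (k : ℤ) * (t : ℤ) + 2 * (k : ℤ) ≤ (((Rᶜ).neighborSet v ∩ S).ncard : ℤ)) ∧
      ((((Rᶜ).neighborSet v ∩ S).ncard : ℤ) ≤ (n : ℤ) + (k : ℤ) - 2) := by
  classical
  intro v hv
  -- every vertex has red degree at most n - 2
  have hdegR : ∀ w : Fin N, R.degree w ≤ n - 2 := by
    intro w
    by_contra hcon
    push_neg at hcon
    apply hred
    have hle : n - 1 ≤ (R.neighborFinset w).card := by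
      have : R.degree w = (R.neighborFinset w).card := rfl
      omega
    refine ⟨Sum.elim (fun _ : Fin 1 => w)
      (fun i => ((R.neighborFinset w).equivFin.symm (Fin.castLE hle i) : Fin N)), ?_, ?_⟩
    · intro a b hab
      match a, b with
      | Sum.inl a, Sum.inl b => rw [Subsingleton.elim a b]
      | Sum.inr a, Sum.inr b =>
        simp only [Sum.elim_inr] at hab
        have := (R.neighborFinset w).equivFin.symm.injective (Subtype.ext hab)
        rw [Fin.castLE_injective hle this]
      | Sum.inl a, Sum.inr b =>
        exfalso
        simp only [Sum.elim_inl, Sum.elim_inr] at hab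
        have hmem := ((R.neighborFinset w).equivFin.symm (Fin.castLE hle b)).2
        rw [SimpleGraph.mem_neighborFinset] at hmem
        exact hmem.ne hab
      | Sum.inr a, Sum.inl b =>
        exfalso
        simp only [Sum.elim_inl, Sum.elim_inr] at hab
        have hmem := ((R.neighborFinset w).equivFin.symm (Fin.castLE hle a)).2
        rw [SimpleGraph.mem_neighborFinset] at hmem
        exact hmem.ne hab.symm
    · intro a b hab
      have hnb : ∀ i : Fin (n-1),
          R.Adj w ((R.neighborFinset w).equivFin.symm (Fin.castLE hle i) : Fin N) := by
        intro i
        have hmem := ((R.neighborFinset w).equivFin.symm (Fin.castLE hle i)).2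
        rwa [SimpleGraph.mem_neighborFinset] at hmem
      rcases hab with ⟨h1, h2⟩ | ⟨h1, h2⟩
      · match a, b with
        | Sum.inl a, Sum.inr b => exact hnb b
      · match a, b with
        | Sum.inr a, Sum.inl b => exact (hnb a).symm
  -- basic integer facts
  have hNZ : (N : ℤ) = 2 * n + t - 2 := by omega
  have hAcard : A.ncard = (t - 1) * (2 * k + 1) := by
    rw [hA]
    have h1 : (Set.range f).ncard = Nat.card (Fin (t - 1) × Option (Fin k × Fin 2)) := by
      rw [Set.ncard_eq_toFinset_card', Set.toFinset_range]
      rw [Finset.card_image_of_injective _ hf_inj, Finset.card_univ, Nat.card_eq_fintype_card]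
    rw [h1, Nat.card_eq_fintype_card]
    simp [Fintype.card_prod, Fintype.card_option, mul_comm, mul_add, add_comm]
  have hvS : v ∈ S := hv
  have hdegB : ∀ w : Fin N, (Rᶜ).degree w = N - 1 - R.degree w := by
    intro w
    rw [SimpleGraph.degree_compl]
    simp
  have hdegBv : n + t - 1 ≤ (Rᶜ).degree v := by
    have h1 := hdegB v
    have h2 := hdegR v
    have h3 : R.degree v < N := lt_of_lt_of_le (R.degree_lt_card_verts v) (by simp)
    omega
  -- the neighbor set has ncard equal to the degree
  have hnb_card : ((Rᶜ).neighborSet v).ncard = (Rᶜ).degree v := by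
    rw [Set.ncard_eq_toFinset_card']
    rfl
  -- lower bound
  have hlow : ((n : ℤ) - 2 * (k : ℤ) * (t : ℤ) + 2 * (k : ℤ) ≤
      (((Rᶜ).neighborSet v ∩ S).ncard : ℤ)) := by
    have hsub : (Rᶜ).neighborSet v ⊆ ((Rᶜ).neighborSet v ∩ S) ∪ A := by
      intro z hz
      by_cases hzA : z ∈ A
      · exact Or.inr hzA
      · exact Or.inl ⟨hz, by rw [hS]; exact hzA⟩
    have h1 : ((Rᶜ).neighborSet v).ncard ≤ ((Rᶜ).neighborSet v ∩ S).ncard + A.ncard := by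
      calc ((Rᶜ).neighborSet v).ncard ≤ (((Rᶜ).neighborSet v ∩ S) ∪ A).ncard :=
            Set.ncard_le_ncard hsub (Set.toFinite _)
        _ ≤ _ := Set.ncard_union_le _ _
    rw [hnb_card, hAcard] at h1
    have e1 : ((t:ℤ) - 1) * (2*k+1) = 2*k*t + t - 2*k - 1 := by ring
    have h2 : (((t:ℕ) - 1) * (2 * k + 1) : ℤ) = ((t:ℤ) - 1) * (2*(k:ℤ)+1) := by
      push_cast [Nat.cast_sub (by omega : 1 ≤ t)]
      ring
    have h3 : ((n:ℤ) + t - 1 : ℤ) ≤ ((Rᶜ).degree v : ℤ) := by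
      have := hdegBv; omega
    have h4 : ((Rᶜ).degree v : ℤ) ≤ (((Rᶜ).neighborSet v ∩ S).ncard : ℤ) +
        (((t:ℕ) - 1) * (2 * k + 1) : ℕ) := by exact_mod_cast h1
    push_cast [Nat.cast_sub (by omega : 1 ≤ t)] at h4
    nlinarith [h3, h4]
  refine ⟨hlow, ?_⟩
  -- upper bound
  by_contra hbig
  push_neg at hbig
  have hbigN : n + k - 1 ≤ ((Rᶜ).neighborSet v ∩ S).ncard := by omega
  have hfin : ((Rᶜ).neighborSet v ∩ S).Finite := Set.toFinite _
  set T : Finset (Fin N) := hfin.toFinset with hTdef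
  have hTmem : ∀ z, z ∈ T ↔ ((Rᶜ).Adj v z ∧ z ∈ S) := by
    intro z
    rw [hTdef, Set.Finite.mem_toFinset]
    exact Iff.rfl
  have hTcard : T.card = ((Rᶜ).neighborSet v ∩ S).ncard := by
    rw [hTdef, ← Set.ncard_eq_toFinset_card _ hfin]
  have h26 : 26 * k ≤ n := by nlinarith [hn1, mul_le_mul_of_nonneg_right ht (Nat.zero_le k)]
  have hTbig : n + k - 1 ≤ T.card := by omega
  have hdegT : ∀ u ∈ T, k ≤ (T.filter (fun z => (Rᶜ).Adj u z)).card := by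
    intro u hu
    have hsub : T \ (insert u (R.neighborFinset u)) ⊆ T.filter (fun z => (Rᶜ).Adj u z) := by
      intro z hz
      rw [Finset.mem_sdiff, Finset.mem_insert] at hz
      push_neg at hz
      obtain ⟨hzT, hzu, hzR⟩ := hz
      rw [Finset.mem_filter]
      refine ⟨hzT, ?_⟩
      rw [SimpleGraph.compl_adj]
      exact ⟨fun h => hzu h.symm, fun h => hzR (by rwa [SimpleGraph.mem_neighborFinset])⟩
    have h1 : T.card ≤ (T \ (insert u (R.neighborFinset u))).card +
        (insert u (R.neighborFinset u)).card := by
      rw [Finset.card_sdiff_add_card]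
      exact Finset.card_le_card Finset.subset_union_left
    have h2 : (insert u (R.neighborFinset u)).card ≤ 1 + (n - 2) := by
      have := Finset.card_insert_le u (R.neighborFinset u)
      have := hdegR u
      have : R.degree u = (R.neighborFinset u).card := rfl
      omega
    have h3 := Finset.card_le_card hsub
    omega
  have hTk : 2 * k ≤ T.card := by omega
  obtain ⟨p, hp1, hp2⟩ := matching_lemma (Rᶜ) T k hdegT hTk
  -- endpoints map
  set ep : Option (Fin k × Fin 2) → Fin N :=
    fun o => o.elim v (fun ia => if ia.2 = 0 then (p ia.1).1 else (p ia.1).2) with hepdef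
  have hep_someT : ∀ ia : Fin k × Fin 2, ep (some ia) ∈ T := by
    intro ia
    rw [hepdef]
    simp only [Option.elim_some]
    by_cases h : ia.2 = 0
    · rw [if_pos h]; exact (hp1 ia.1).1
    · rw [if_neg h]; exact (hp1 ia.1).2.1
  have hep_S : ∀ o, ep o ∈ S := by
    intro o
    match o with
    | none => exact hvS
    | some ia => exact ((hTmem _).mp (hep_someT ia)).2
  have hep_adj_v : ∀ ia : Fin k × Fin 2, (Rᶜ).Adj v (ep (some ia)) :=
    fun ia => ((hTmem _).mp (hep_someT ia)).1
  have hfin2 : ∀ a : Fin 2, a = 0 ∨ a = 1 := by decide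
  have hep_none : ep none = v := rfl
  have hep_some0 : ∀ i : Fin k, ep (some (i, 0)) = (p i).1 := by
    intro i; rw [hepdef]; simp
  have hep_some1 : ∀ i : Fin k, ep (some (i, 1)) = (p i).2 := by
    intro i; rw [hepdef]; simp
  have hep_inj : Function.Injective ep := by
    intro o o' h
    match o, o' with
    | none, none => rfl
    | none, some ia =>
      rw [hep_none] at h
      exact absurd h (hep_adj_v ia).ne
    | some ia, none =>
      rw [hep_none] at h
      exact absurd h.symm (hep_adj_v ia).ne
    | some ⟨i, c⟩, some ⟨i', c'⟩ =>
      by_cases hii : i = i'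
      · subst hii
        rcases hfin2 c with hc | hc <;> rcases hfin2 c' with hc' | hc' <;>
            subst hc <;> subst hc'
        · rfl
        · rw [hep_some0, hep_some1] at h
          exact absurd h (hp1 i).2.2.ne
        · rw [hep_some0, hep_some1] at h
          exact absurd h.symm (hp1 i).2.2.ne
        · rfl
      · exfalso
        have hd := hp2 i i' hii
        rcases hfin2 c with hc | hc <;> rcases hfin2 c' with hc' | hc' <;>
            subst hc <;> subst hc' <;>
          simp only [hep_some0, hep_some1] at h
        · exact hd.1 h
        · exact hd.2.1 h
        · exact hd.2.2.1 h
        · exact hd.2.2.2 h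
  -- the set A as range f
  have hAmem : ∀ x, f x ∈ A := by intro x; rw [hA]; exact ⟨x, rfl⟩
  have hepA : ∀ o, ep o ∉ A := by
    intro o hcon
    have := hep_S o
    rw [hS] at this
    exact this hcon
  -- adjacency between endpoints of one matching edge
  have hep_edge : ∀ (i : Fin k) (c c' : Fin 2), c ≠ c' →
      (Rᶜ).Adj (ep (some (i, c))) (ep (some (i, c'))) := by
    intro i c c' hcc
    rcases hfin2 c with hc | hc <;> rcases hfin2 c' with hc' | hc' <;>
        subst hc <;> subst hc'
    · exact absurd rfl hcc
    · rw [hep_some0, hep_some1]; exact (hp1 i).2.2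
    · rw [hep_some0, hep_some1]; exact (hp1 i).2.2.symm
    · exact absurd rfl hcc
  -- build a blue copy of t F_k
  apply hblue
  refine ⟨fun x => if h : (x.1 : ℕ) < t - 1 then f (⟨(x.1 : ℕ), h⟩, x.2) else ep x.2, ?_, ?_⟩
  · intro a b hab
    dsimp only at hab
    by_cases ha : (a.1 : ℕ) < t - 1 <;> by_cases hb : (b.1 : ℕ) < t - 1
    · rw [dif_pos ha, dif_pos hb] at hab
      have heq := Prod.ext_iff.mp (hf_inj hab)
      have h1 : (a.1 : ℕ) = (b.1 : ℕ) := by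
        simpa using congrArg (fun y : Fin (t - 1) => (y : ℕ)) heq.1
      exact Prod.ext (Fin.ext h1) heq.2
    · rw [dif_pos ha, dif_neg hb] at hab
      exact absurd (hab ▸ hAmem _) (hepA _)
    · rw [dif_neg ha, dif_pos hb] at hab
      exact absurd (hab.symm ▸ hAmem _) (hepA _)
    · rw [dif_neg ha, dif_neg hb] at hab
      have h1 : (a.1 : ℕ) = t - 1 := by have := a.1.isLt; omega
      have h2 : (b.1 : ℕ) = t - 1 := by have := b.1.isLt; omega
      exact Prod.ext (Fin.ext (h1.trans h2.symm)) (hep_inj hab)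
  · intro a b hab
    obtain ⟨h1, h2⟩ := hab
    dsimp only
    by_cases ha : (a.1 : ℕ) < t - 1
    · have hb : (b.1 : ℕ) < t - 1 := by rw [← h1]; exact ha
      rw [dif_pos ha, dif_pos hb]
      exact hf_adj ⟨Fin.ext (by simp [h1]), h2⟩
    · have hb : ¬ (b.1 : ℕ) < t - 1 := by rw [← h1]; exact ha
      rw [dif_neg ha, dif_neg hb]
      rw [fan, SimpleGraph.fromRel_adj] at h2
      obtain ⟨hne, hrel⟩ := h2
      match ha2 : a.2, hb2 : b.2 with
      | none, none => exact absurd rfl (by rw [ha2, hb2] at hne; exact hne)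
      | none, some ia =>
        rw [hep_none]
        exact hep_adj_v ia
      | some ia, none =>
        rw [hep_none]
        exact (hep_adj_v ia).symm
      | some ⟨i, c⟩, some ⟨i', c'⟩ =>
        rw [ha2, hb2] at hrel hne
        have hii : i = i' := by
          rcases hrel with h | h
          · rcases h with h | ⟨j, x, y, hx, hy⟩
            · exact absurd h (by simp)
            · have e1 := (Prod.ext_iff.mp (Option.some_inj.mp hx)).1
              have e2 := (Prod.ext_iff.mp (Option.some_inj.mp hy)).1
              exact e1.trans e2.symm
          · rcases h with h | ⟨j, x, y, hx, hy⟩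
            · exact absurd h (by simp)
            · have e1 := (Prod.ext_iff.mp (Option.some_inj.mp hx)).1
              have e2 := (Prod.ext_iff.mp (Option.some_inj.mp hy)).1
              exact e2.trans e1.symm
        subst hii
        have hcc : c ≠ c' := by
          intro h
          exact hne (by rw [h])
        exact hep_edge i c c' hcc
end

section
/- Let k ≥ 1 and t ≥ 2 be integers, let n ≥ max{12tk + 2k, 4tk^2}, and set N = 2n + t − 2. Suppose the edges of the complete graph K_N are colored red and blue so that there is no red copy of the star K_{1,n−1} and no blue copy of tF_k. Let A be the vertex set of a blue copy of (t−1)F_k in K_N and let S = V(K_N) \ A. Then there exist two disjoint subsets Z_1 and Z_2 of S such that for each i ∈ {1,2}: the graph formed by the blue edges inside Z_i has at most 3(k−1) non-isolated vertices and maximum degree at most 2(k−1), and n − 2kt + k + 1 ≤ |Z_i| ≤ n + k − 2. -/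
open SimpleGraph

/-- The blue graph inside `Z` (with blue graph `Rᶜ`) has at most `3(k−1)` non-isolated
vertices and maximum degree at most `2(k−1)`. -/
def blueAlmostIndependent {N : ℕ} (R : SimpleGraph (Fin N)) (k : ℕ) (Z : Set (Fin N)) : Prop :=
  ({v ∈ Z | ∃ w ∈ Z, (Rᶜ).Adj v w}).ncard ≤ 3 * (k - 1) ∧
    ∀ v ∈ Z, (((Rᶜ).neighborSet v ∩ Z).ncard ≤ 2 * (k - 1))

lemma exists_inj_of_le_ncard {α : Type*} {s : Set α} {m : ℕ} (hs : s.Finite)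
    (h : m ≤ s.ncard) : ∃ φ : Fin m → α, Function.Injective φ ∧ ∀ i, φ i ∈ s := by
  obtain ⟨t, hts, htm⟩ := Set.exists_subset_card_eq h
  have htf : t.Finite := hs.subset hts
  have hft : Finite t := htf.to_subtype
  have hc : Nat.card t = m := by rw [Nat.card_coe_set_eq, htm]
  let eqv : t ≃ Fin m := Finite.equivFinOfCardEq hc
  refine ⟨fun i => (eqv.symm i : α), ?_, fun i => hts (eqv.symm i).2⟩
  intro a b hab
  have : eqv.symm a = eqv.symm b := Subtype.ext hab
  simpa using congrArg eqv this

lemma noKMatching {k t N : ℕ} (ht : 2 ≤ t)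
    (R : SimpleGraph (Fin N))
    (hblue : ¬ (Rᶜ).ContainsCopy (copies t (fan k)))
    (f : Fin (t - 1) × Option (Fin k × Fin 2) → Fin N)
    (hf_inj : Function.Injective f)
    (hf_adj : ∀ ⦃a b⦄, (copies (t - 1) (fan k)).Adj a b → (Rᶜ).Adj (f a) (f b))
    (u : Fin N) (hu : u ∉ Set.range f)
    (e : Fin k × Fin 2 → Fin N) (he : Function.Injective e)
    (hmem : ∀ p, (Rᶜ).Adj u (e p) ∧ e p ∉ Set.range f)
    (hadj : ∀ i : Fin k, (Rᶜ).Adj (e (i, 0)) (e (i, 1))) : False := by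
  apply hblue
  refine ⟨fun p => if h : p.1.1 < t - 1 then f (⟨p.1.1, h⟩, p.2) else p.2.elim u e, ?_, ?_⟩
  · rintro ⟨⟨i, hi⟩, x⟩ ⟨⟨i', hi'⟩, x'⟩ hpq
    dsimp at hpq
    split_ifs at hpq with h1 h2 h2
    · have := hf_inj hpq
      simp only [Prod.mk.injEq, Fin.mk.injEq] at this
      simp [Prod.ext_iff, Fin.ext_iff, this.1, this.2]
    · exfalso
      cases x' with
      | none => exact hu ⟨_, hpq⟩
      | some p => exact (hmem p).2 ⟨_, hpq⟩
    · exfalso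
      cases x with
      | none => exact hu ⟨_, hpq.symm⟩
      | some p => exact (hmem p).2 ⟨_, hpq.symm⟩
    · have hii : i = i' := by omega
      have hxx : x = x' := by
        cases x with
        | none =>
          cases x' with
          | none => rfl
          | some p => exact absurd hpq (hmem p).1.ne
        | some p =>
          cases x' with
          | none => exact absurd hpq.symm (hmem p).1.ne
          | some p' => exact congrArg some (he hpq)
      simp [Prod.ext_iff, Fin.ext_iff, hii, hxx]
  · rintro ⟨⟨i, hi⟩, x⟩ ⟨⟨i', hi'⟩, x'⟩ ⟨hii, hxx⟩
    have hii' : i = i' := congrArg Fin.val hii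
    subst hii'
    have key : ∀ x x' : Option (Fin k × Fin 2), x ≠ x' →
        (x = none ∨ ∃ i a b, x = some (i, a) ∧ x' = some (i, b)) →
        (Rᶜ).Adj (x.elim u e) (x'.elim u e) := by
      rintro x x' hne (rfl | ⟨j, a, b, rfl, rfl⟩)
      · cases x' with
        | none => exact absurd rfl hne
        | some p => exact (hmem p).1
      · have hab : a ≠ b := fun h => hne (by rw [h])
        fin_cases a <;> fin_cases b <;> first
          | exact absurd rfl hab
          | exact hadj j
          | exact (hadj j).symm
    rw [fan, fromRel_adj] at hxx
    dsimp only
    split_ifs with h1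
    · exact hf_adj ⟨rfl, hxx⟩
    · rcases hxx.2 with hr | hr
      · exact key x x' hxx.1 hr
      · exact (key x' x hxx.1.symm hr).symm

def IsMatch {N : ℕ} (R : SimpleGraph (Fin N)) (W : Set (Fin N)) (j : ℕ)
    (e : Fin j × Fin 2 → Fin N) : Prop :=
  Function.Injective e ∧ (∀ p, e p ∈ W) ∧ ∀ i : Fin j, (Rᶜ).Adj (e (i, 0)) (e (i, 1))

lemma mainZ {N k : ℕ} (hk : 1 ≤ k) (R : SimpleGraph (Fin N)) (W : Set (Fin N))
    (hnm : ¬ ∃ e, IsMatch R W k e) :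
    ∃ Z ⊆ W, blueAlmostIndependent R k Z ∧ W.ncard ≤ Z.ncard + (k - 1) ∧
      Z.ncard ≤ W.ncard ∧
      (3 * (k - 1) < Z.ncard → ∃ v ∈ Z, ∀ x ∈ Z, ¬ (Rᶜ).Adj v x) := by
  classical
  set P : ℕ → Prop := fun j => ∃ e, IsMatch R W j e with hP
  have hP0 : P 0 := ⟨fun p => p.1.elim0, fun p => p.1.elim0, fun p => p.1.elim0, fun i => i.elim0⟩
  have hmono : ∀ {a b : ℕ}, a ≤ b → P b → P a := by
    rintro a b hab ⟨e, einj, emem, eadj⟩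
    refine ⟨fun p => e (Fin.castLE hab p.1, p.2), ?_, fun p => emem _, fun i => eadj _⟩
    intro p q hpq
    have := einj hpq
    simp only [Prod.mk.injEq] at this
    have h1 : p.1 = q.1 := Fin.castLE_injective hab this.1
    exact Prod.ext h1 this.2
  have hPk : ¬ P k := hnm
  set m := Nat.findGreatest P (k - 1) with hmdef
  have hm : P m := Nat.findGreatest_spec (Nat.zero_le _) hP0
  have hmle : m ≤ k - 1 := Nat.findGreatest_le _
  have hmax : ¬ P (m + 1) := by
    rcases le_or_gt (m + 1) (k - 1) with h | h
    · exact Nat.findGreatest_is_greatest (Nat.lt_succ_self m) h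
    · intro hp; exact hPk (hmono (by omega) hp)
  clear_value m
  clear hmdef hP0 hmono hPk hnm
  obtain ⟨e, einj, emem, eadj⟩ := hm
  have dec20 : ∀ c : Fin 2, c ≠ 0 → c = 1 := by decide
  have dec21 : ∀ c : Fin 2, c ≠ 1 → c = 0 := by decide
  set Rng := Set.range e with hRng
  set I := W \ Rng with hIdef
  have hIW : I ⊆ W := Set.diff_subset
  have hInotR : ∀ {z}, z ∈ I → z ∉ Rng := fun hz => hz.2
  -- independence of I
  have indep : ∀ x ∈ I, ∀ y ∈ I, ¬ (Rᶜ).Adj x y := by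
    intro x hx y hy hadj
    apply hmax
    refine ⟨fun p => if h : p.1.1 < m then e (⟨p.1.1, h⟩, p.2) else if p.2 = 0 then x else y,
      ?_, ?_, ?_⟩
    · rintro ⟨⟨i, hi⟩, a⟩ ⟨⟨i', hi'⟩, a'⟩ hpq
      dsimp at hpq
      by_cases h1 : i < m <;> by_cases h2 : i' < m
      · rw [dif_pos h1, dif_pos h2] at hpq
        have := einj hpq
        simp only [Prod.mk.injEq, Fin.mk.injEq] at this
        obtain ⟨h5, h6⟩ := this
        subst h5; subst h6; rfl
      · rw [dif_pos h1, dif_neg h2] at hpq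
        have hmem' : (if a' = 0 then x else y) ∈ I := by split_ifs <;> assumption
        exact absurd ⟨_, hpq⟩ (hInotR hmem')
      · rw [dif_neg h1, dif_pos h2] at hpq
        have hmem' : (if a = 0 then x else y) ∈ I := by split_ifs <;> assumption
        exact absurd ⟨_, hpq.symm⟩ (hInotR hmem')
      · rw [dif_neg h1, dif_neg h2] at hpq
        have hne : x ≠ y := hadj.ne
        have hii : i = i' := by omega
        subst hii
        by_cases h4 : a = 0 <;> by_cases h5 : a' = 0
        · subst h4; subst h5; rfl
        · rw [if_pos h4, if_neg h5] at hpq; exact absurd hpq hne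
        · rw [if_neg h4, if_pos h5] at hpq; exact absurd hpq.symm hne
        · rw [dec20 a h4, dec20 a' h5]
    · rintro ⟨⟨i, hi⟩, a⟩
      dsimp
      split_ifs
      · exact emem _
      · exact hx.1
      · exact hy.1
    · rintro ⟨i, hi⟩
      dsimp
      by_cases h1 : i < m
      · rw [dif_pos h1, dif_pos h1]; exact eadj _
      · rw [dif_neg h1, dif_neg h1]; exact hadj
  -- augmenting lemma
  have aug : ∀ (i : Fin m) (b : Fin 2) (i₁ i₂ j : Fin N), i₁ ∈ I → i₂ ∈ I → j ∈ I →
      i₁ ≠ i₂ → (Rᶜ).Adj (e (i, b)) i₁ → (Rᶜ).Adj (e (i, b)) i₂ →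
      (Rᶜ).Adj (e (i, b + 1)) j → False := by
    intro i b i₁ i₂ j hi₁ hi₂ hj h12 ha1 ha2 haj
    set i' := if j = i₁ then i₂ else i₁ with hi'def
    have hi'I : i' ∈ I := by rw [hi'def]; split_ifs <;> assumption
    have hi'j : i' ≠ j := by
      rw [hi'def]; split_ifs with h
      · rw [h]; exact h12.symm
      · exact fun hh => h hh.symm
    have hai' : (Rᶜ).Adj (e (i, b)) i' := by rw [hi'def]; split_ifs <;> assumption
    have hbb : b ≠ b + 1 := by fin_cases b <;> decide
    apply hmax
    refine ⟨fun p => if h : p.1.1 < m then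
        (if (⟨p.1.1, h⟩ : Fin m) = i ∧ p.2 = 1 then i'
         else e (⟨p.1.1, h⟩, if (⟨p.1.1, h⟩ : Fin m) = i then b else p.2))
      else (if p.2 = 0 then e (i, b + 1) else j), ?_, ?_, ?_⟩
    · rintro ⟨⟨l, hl⟩, a⟩ ⟨⟨l', hl'⟩, a'⟩ hpq
      dsimp at hpq
      by_cases h1 : l < m <;> by_cases h2 : l' < m
      · rw [dif_pos h1, dif_pos h2] at hpq
        by_cases h3 : (⟨l, h1⟩ : Fin m) = i ∧ a = 1 <;>
          by_cases h4 : (⟨l', h2⟩ : Fin m) = i ∧ a' = 1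
        · -- A-A
          have h5 : l = l' := congrArg Fin.val (h3.1.trans h4.1.symm)
          have h6 : a = a' := h3.2.trans h4.2.symm
          subst h5; subst h6; rfl
        · -- A-B
          rw [if_pos h3, if_neg h4] at hpq
          exact absurd ⟨_, hpq.symm⟩ (hInotR hi'I)
        · -- B-A
          rw [if_neg h3, if_pos h4] at hpq
          exact absurd ⟨_, hpq⟩ (hInotR hi'I)
        · -- B-B
          rw [if_neg h3, if_neg h4] at hpq
          have := einj hpq
          simp only [Prod.mk.injEq, Fin.mk.injEq] at this
          obtain ⟨hll, hcc⟩ := this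
          subst hll
          have haa : a = a' := by
            by_cases h5 : (⟨l, h1⟩ : Fin m) = i
            · have ha0 : a ≠ 1 := fun hh => h3 ⟨h5, hh⟩
              have ha'0 : a' ≠ 1 := fun hh => h4 ⟨h5, hh⟩
              rw [dec21 a ha0, dec21 a' ha'0]
            · rw [if_neg h5, if_neg h5] at hcc
              exact hcc
          subst haa; rfl
      · rw [dif_pos h1, dif_neg h2] at hpq
        by_cases h3 : (⟨l, h1⟩ : Fin m) = i ∧ a = 1 <;> by_cases h4 : a' = 0
        · rw [if_pos h3, if_pos h4] at hpq
          exact absurd ⟨_, hpq.symm⟩ (hInotR hi'I)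
        · rw [if_pos h3, if_neg h4] at hpq
          exact absurd hpq hi'j
        · rw [if_neg h3, if_pos h4] at hpq
          have := einj hpq
          simp only [Prod.mk.injEq] at this
          obtain ⟨hli, hcc⟩ := this
          rw [if_pos hli] at hcc
          exact absurd hcc hbb
        · rw [if_neg h3, if_neg h4] at hpq
          exact absurd ⟨_, hpq⟩ (hInotR hj)
      · rw [dif_neg h1, dif_pos h2] at hpq
        by_cases h3 : (⟨l', h2⟩ : Fin m) = i ∧ a' = 1 <;> by_cases h4 : a = 0
        · rw [if_pos h3] at hpq; rw [if_pos h4] at hpq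
          exact absurd ⟨_, hpq⟩ (hInotR hi'I)
        · rw [if_pos h3] at hpq; rw [if_neg h4] at hpq
          exact absurd hpq.symm hi'j
        · rw [if_neg h3] at hpq; rw [if_pos h4] at hpq
          have := einj hpq.symm
          simp only [Prod.mk.injEq] at this
          obtain ⟨hli, hcc⟩ := this
          rw [if_pos hli] at hcc
          exact absurd hcc hbb
        · rw [if_neg h3] at hpq; rw [if_neg h4] at hpq
          exact absurd ⟨_, hpq.symm⟩ (hInotR hj)
      · rw [dif_neg h1, dif_neg h2] at hpq
        have hll : l = l' := by omega
        subst hll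
        by_cases h4 : a = 0 <;> by_cases h5 : a' = 0
        · subst h4; subst h5; rfl
        · rw [if_pos h4, if_neg h5] at hpq
          exact absurd ⟨_, hpq⟩ (hInotR hj)
        · rw [if_neg h4, if_pos h5] at hpq
          exact absurd ⟨_, hpq.symm⟩ (hInotR hj)
        · rw [dec20 a h4, dec20 a' h5]
    · rintro ⟨⟨l, hl⟩, a⟩
      dsimp
      split_ifs <;> first | exact emem _ | exact hi'I.1 | exact hj.1
    · rintro ⟨l, hl⟩
      dsimp
      by_cases h1 : l < m
      · have c01 : (((0 : Fin 2) = 1)) = False := by decide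
        have c11 : (((1 : Fin 2) = 1)) = True := by decide
        rw [dif_pos h1, dif_pos h1]
        by_cases h2 : (⟨l, h1⟩ : Fin m) = i
        · simp only [h2, c01, c11, and_false, and_true, if_false, if_true, if_pos rfl]
          exact hai'
        · simp only [h2, c01, c11, and_false, and_true, if_false, if_true, false_and]
          exact eadj _
      · rw [dif_neg h1, dif_neg h1]
        exact haj
  -- endpoint selection
  have hchoice : ∀ i : Fin m, ∃ bi : Fin 2,
      (I ∩ (Rᶜ).neighborSet (e (i, bi))).Subsingleton := by
    intro i
    by_cases hs : (I ∩ (Rᶜ).neighborSet (e (i, 0))).Subsingleton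
    · exact ⟨0, hs⟩
    · refine ⟨1, ?_⟩
      rw [Set.not_subsingleton_iff] at hs
      obtain ⟨i₁, hi₁, i₂, hi₂, h12⟩ := hs
      intro j hjmem j' hj'
      exact (aug i 0 i₁ i₂ j hi₁.1 hi₂.1 hjmem.1 h12 hi₁.2 hi₂.2 hjmem.2).elim
  choose c hc using hchoice
  set X := Set.range (fun i : Fin m => e (i, c i)) with hXdef
  set Z := I ∪ X with hZdef
  have hXRng : X ⊆ Rng := by rintro _ ⟨i, rfl⟩; exact ⟨_, rfl⟩
  have hXW : X ⊆ W := by rintro _ ⟨i, rfl⟩; exact emem _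
  have hZW : Z ⊆ W := Set.union_subset hIW hXW
  have hIXdisj : Disjoint I X :=
    Set.disjoint_left.mpr (fun {a} haI haX => hInotR haI (hXRng haX))
  have hXcard : X.ncard = m := by
    have hinj : Function.Injective (fun i : Fin m => e (i, c i)) := by
      intro a b hab
      have := einj hab
      exact congrArg Prod.fst this
    rw [hXdef, ← Set.image_univ, Set.ncard_image_of_injective _ hinj, Set.ncard_univ]
    simp
  have hRngcard : Rng.ncard = 2 * m := by
    rw [hRng, ← Set.image_univ, Set.ncard_image_of_injective _ einj, Set.ncard_univ]
    simp [Nat.card_eq_fintype_card]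
    omega
  have hRngW : Rng ⊆ W := by rintro _ ⟨p, rfl⟩; exact emem p
  have hIcard : I.ncard = W.ncard - 2 * m := by
    rw [hIdef, Set.ncard_diff hRngW, hRngcard]
  have hRngle : 2 * m ≤ W.ncard := hRngcard ▸ Set.ncard_le_ncard hRngW
  have hZcard : Z.ncard = W.ncard - 2 * m + m := by
    rw [hZdef, Set.ncard_union_eq hIXdisj, hIcard, hXcard]
  -- the set of I-vertices adjacent to X
  set r : Fin m → Fin N := fun i =>
    if h : (I ∩ (Rᶜ).neighborSet (e (i, c i))).Nonempty then h.some else e (i, c i) with hrdef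
  have hT1 : ∀ (i : Fin m) (v : Fin N), v ∈ I ∩ (Rᶜ).neighborSet (e (i, c i)) → v = r i := by
    intro i v hv
    have hne : (I ∩ (Rᶜ).neighborSet (e (i, c i))).Nonempty := ⟨v, hv⟩
    rw [hrdef]
    dsimp only
    rw [dif_pos hne]
    exact hc i hv hne.some_mem
  have hTcard : (Set.range r).ncard ≤ m := by
    rw [← Set.image_univ]
    refine le_trans (Set.ncard_image_le (Set.toFinite _)) ?_
    rw [Set.ncard_univ]
    simp
  -- non-isolated vertices
  have hNIsub : {v ∈ Z | ∃ w ∈ Z, (Rᶜ).Adj v w} ⊆ X ∪ Set.range r := by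
    rintro v ⟨hvZ, w, hwZ, hvw⟩
    rcases hvZ with hvI | hvX
    · rcases hwZ with hwI | hwX
      · exact absurd hvw (indep v hvI w hwI)
      · obtain ⟨i, rfl⟩ := hwX
        exact Or.inr ⟨i, (hT1 i v ⟨hvI, hvw.symm⟩).symm⟩
    · exact Or.inl hvX
  have hNI : ({v ∈ Z | ∃ w ∈ Z, (Rᶜ).Adj v w}).ncard ≤ 3 * (k - 1) := by
    refine le_trans (Set.ncard_le_ncard hNIsub (Set.toFinite _)) ?_
    refine le_trans (Set.ncard_union_le _ _) ?_
    omega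
  -- degrees
  have hdeg : ∀ v ∈ Z, ((Rᶜ).neighborSet v ∩ Z).ncard ≤ 2 * (k - 1) := by
    intro v hv
    rcases hv with hvI | hvX
    · have hsub : (Rᶜ).neighborSet v ∩ Z ⊆ X := by
        rintro w ⟨hwN, hwZ⟩
        rcases hwZ with hwI | hwX
        · exact absurd hwN (indep v hvI w hwI)
        · exact hwX
      refine le_trans (Set.ncard_le_ncard hsub (Set.toFinite _)) ?_
      omega
    · obtain ⟨i, rfl⟩ := hvX
      have hm1 : 0 < m := i.pos
      have hsub : (Rᶜ).neighborSet (e (i, c i)) ∩ Z ⊆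
          X ∪ (I ∩ (Rᶜ).neighborSet (e (i, c i))) := by
        rintro w ⟨hwN, hwZ⟩
        rcases hwZ with hwI | hwX
        · exact Or.inr ⟨hwI, hwN⟩
        · exact Or.inl hwX
      have hone : (I ∩ (Rᶜ).neighborSet (e (i, c i))).ncard ≤ 1 :=
        (Set.ncard_le_one (Set.toFinite _)).mpr (fun a ha b hb => hc i ha hb)
      refine le_trans (Set.ncard_le_ncard hsub (Set.toFinite _)) ?_
      refine le_trans (Set.ncard_union_le _ _) ?_
      omega
  -- isolated vertex
  have hiso : 3 * (k - 1) < Z.ncard → ∃ v ∈ Z, ∀ x ∈ Z, ¬ (Rᶜ).Adj v x := by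
    intro hlt
    have hbig : ¬ (Z ⊆ X ∪ Set.range r) := by
      intro hsub
      have h1 := Set.ncard_le_ncard hsub (Set.toFinite _)
      have h2 := Set.ncard_union_le X (Set.range r)
      omega
    obtain ⟨v, hvZ, hvn⟩ := Set.not_subset.mp hbig
    have hvI : v ∈ I := by
      rcases hvZ with h | h
      · exact h
      · exact absurd (Or.inl h) hvn
    refine ⟨v, hvZ, ?_⟩
    intro x hxZ hadj
    rcases hxZ with hxI | hxX
    · exact indep v hvI x hxI hadj
    · obtain ⟨i, rfl⟩ := hxX
      exact hvn (Or.inr ⟨i, (hT1 i v ⟨hvI, hadj.symm⟩).symm⟩)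
  exact ⟨Z, hZW, ⟨hNI, hdeg⟩, by omega, by omega, hiso⟩

lemma red_deg_le {n N : ℕ} (hn : 2 ≤ n) (R : SimpleGraph (Fin N))
    (hred : ¬ R.ContainsCopy (completeBipartiteGraph (Fin 1) (Fin (n - 1))))
    (v : Fin N) : (R.neighborSet v).ncard ≤ n - 2 := by
  by_contra hlt
  push_neg at hlt
  have hge : n - 1 ≤ (R.neighborSet v).ncard := by omega
  obtain ⟨φ, hφinj, hφmem⟩ := exists_inj_of_le_ncard (Set.toFinite _) hge
  apply hred
  refine ⟨Sum.elim (fun _ => v) φ, ?_, ?_⟩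
  · rintro (a | a) (b | b) hab
    · simp [Subsingleton.elim a b]
    · exact absurd hab ((hφmem b) : R.Adj v (φ b)).ne
    · exact absurd hab.symm ((hφmem a) : R.Adj v (φ a)).ne
    · exact congrArg Sum.inr (hφinj hab)
  · rintro (a | a) (b | b) hab
    · simp at hab
    · exact hφmem b
    · exact ((hφmem a) : R.Adj v (φ a)).symm
    · simp at hab

/-- Claim 2 in the proof of Theorem 6: there are disjoint `Z₁, Z₂ ⊆ S` such that for each
`i`, the blue graph inside `Zᵢ` has at most `3(k−1)` non-isolated vertices and maximum
degree at most `2(k−1)`, and `n − 2kt + k + 1 ≤ |Zᵢ| ≤ n + k − 2`. -/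
theorem exists_Z1_Z2 (k t n N : ℕ) (hk : 1 ≤ k) (ht : 2 ≤ t)
    (hn1 : 12 * t * k + 2 * k ≤ n) (hn2 : 4 * t * k ^ 2 ≤ n)
    (hN : N = 2 * n + t - 2)
    (R : SimpleGraph (Fin N))
    (hred : ¬ R.ContainsCopy (completeBipartiteGraph (Fin 1) (Fin (n - 1))))
    (hblue : ¬ (Rᶜ).ContainsCopy (copies t (fan k)))
    (f : Fin (t - 1) × Option (Fin k × Fin 2) → Fin N)
    (hf_inj : Function.Injective f)
    (hf_adj : ∀ ⦃a b⦄, (copies (t - 1) (fan k)).Adj a b → (Rᶜ).Adj (f a) (f b))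
    (A S : Set (Fin N)) (hA : A = Set.range f) (hS : S = Aᶜ) :
    ∃ Z₁ Z₂ : Set (Fin N), Z₁ ⊆ S ∧ Z₂ ⊆ S ∧ Disjoint Z₁ Z₂ ∧
      blueAlmostIndependent R k Z₁ ∧ blueAlmostIndependent R k Z₂ ∧
      ((n : ℤ) - 2 * (k : ℤ) * (t : ℤ) + (k : ℤ) + 1 ≤ (Z₁.ncard : ℤ) ∧
        (Z₁.ncard : ℤ) ≤ (n : ℤ) + (k : ℤ) - 2) ∧
      ((n : ℤ) - 2 * (k : ℤ) * (t : ℤ) + (k : ℤ) + 1 ≤ (Z₂.ncard : ℤ) ∧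
        (Z₂.ncard : ℤ) ≤ (n : ℤ) + (k : ℤ) - 2) := by
  classical
  -- numeric groundwork
  have hkz : (1 : ℤ) ≤ (k : ℤ) := by exact_mod_cast hk
  have htz : (2 : ℤ) ≤ (t : ℤ) := by exact_mod_cast ht
  have hnz : (12 * (t : ℤ) * k + 2 * k : ℤ) ≤ (n : ℤ) := by exact_mod_cast hn1
  have htk0 : (0 : ℤ) ≤ (t : ℤ) * k := by positivity
  have htk2 : (0 : ℤ) ≤ ((t : ℤ) - 2) * k := mul_nonneg (by linarith) (by linarith)
  have hktn4 : 2 * k * t + 4 * k ≤ n := by zify; linarith [hnz, htk2, hkz]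
  have hn4 : 4 ≤ n := by
    have h4k : 4 * k ≤ n := by omega
    omega
  -- cardinalities
  have hAcard : A.ncard = (t - 1) * (2 * k + 1) := by
    rw [hA, ← Set.image_univ, Set.ncard_image_of_injective _ hf_inj, Set.ncard_univ]
    simp only [Nat.card_eq_fintype_card, Fintype.card_prod, Fintype.card_option,
      Fintype.card_fin]
    ring
  have hSA : A.ncard + S.ncard = N := by
    rw [hS]
    have := Set.ncard_add_ncard_compl A
    simpa [Nat.card_eq_fintype_card] using this
  have hAz : (A.ncard : ℤ) = ((t : ℤ) - 1) * (2 * k + 1) := by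
    rw [hAcard]
    push_cast [Nat.cast_sub (show 1 ≤ t by omega)]
    ring
  have hNz : (N : ℤ) = 2 * (n : ℤ) + t - 2 := by
    rw [hN, Nat.cast_sub (show 2 ≤ 2 * n + t by omega)]
    push_cast
    ring
  have hSz : (S.ncard : ℤ) = 2 * (n : ℤ) + t - 2 - ((t : ℤ) - 1) * (2 * k + 1) := by
    have h1 : (A.ncard : ℤ) + (S.ncard : ℤ) = (N : ℤ) := by exact_mod_cast hSA
    linarith
  -- red degree bound
  have hrdeg : ∀ v, (R.neighborSet v).ncard ≤ n - 2 := red_deg_le (by omega) R hred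
  have hrdegz : ∀ v, ((R.neighborSet v).ncard : ℤ) ≤ (n : ℤ) - 2 := by
    intro v
    have := hrdeg v
    have h2 : ((n - 2 : ℕ) : ℤ) = (n : ℤ) - 2 := by
      rw [Nat.cast_sub (by omega)]; push_cast; ring
    calc ((R.neighborSet v).ncard : ℤ) ≤ ((n - 2 : ℕ) : ℤ) := by exact_mod_cast this
      _ = (n : ℤ) - 2 := h2
  -- blue neighborhoods within S are large
  set q : ℕ := 2 * k * t with hqdef
  set w : ℕ := n + 2 * k - q with hwdef
  have hqn : q + 4 * k ≤ n := hktn4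
  have hwz : (w : ℤ) = (n : ℤ) + 2 * k - 2 * (k : ℤ) * t := by
    rw [hwdef, Nat.cast_sub (show q ≤ n + 2 * k by omega)]
    rw [hqdef]
    push_cast
    ring
  have hblueN : ∀ u ∈ S, w ≤ ((Rᶜ).neighborSet u ∩ S).ncard := by
    intro u hu
    have hsub : S ⊆ insert u (R.neighborSet u ∪ ((Rᶜ).neighborSet u ∩ S)) := by
      intro x hx
      by_cases hxu : x = u
      · subst hxu; exact Set.mem_insert _ _
      · by_cases hadj : R.Adj u x
        · exact Set.mem_insert_of_mem _ (Or.inl hadj)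
        · exact Set.mem_insert_of_mem _ (Or.inr ⟨⟨fun h => hxu h.symm, hadj⟩, hx⟩)
    have h1 : S.ncard ≤ 1 + ((R.neighborSet u).ncard + ((Rᶜ).neighborSet u ∩ S).ncard) := by
      refine le_trans (Set.ncard_le_ncard hsub (Set.toFinite _)) ?_
      refine le_trans (Set.ncard_insert_le _ _) ?_
      have := Set.ncard_union_le (R.neighborSet u) ((Rᶜ).neighborSet u ∩ S)
      omega
    have h1z : (S.ncard : ℤ) ≤ 1 + (((R.neighborSet u).ncard : ℤ)
        + (((Rᶜ).neighborSet u ∩ S).ncard : ℤ)) := by exact_mod_cast h1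
    have h2z := hrdegz u
    have : (w : ℤ) ≤ (((Rᶜ).neighborSet u ∩ S).ncard : ℤ) := by
      rw [hwz]
      linarith [hSz, h1z, h2z, hnz, htk0, hkz, htz]
    exact_mod_cast this
  -- S is nonempty
  have hSne : S.Nonempty := by
    rw [← Set.ncard_pos (Set.toFinite _)]
    have : (0 : ℤ) < (S.ncard : ℤ) := by linarith [hSz, hnz, htk0, hkz, htz]
    exact_mod_cast this
  obtain ⟨u₁, hu₁⟩ := hSne
  -- first blue neighborhood
  obtain ⟨W₁, hW₁sub, hW₁card⟩ := Set.exists_subset_card_eq (hblueN u₁ hu₁)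
  have hW₁S : W₁ ⊆ S := hW₁sub.trans Set.inter_subset_right
  have hW₁N : W₁ ⊆ (Rᶜ).neighborSet u₁ := hW₁sub.trans Set.inter_subset_left
  have hnm₁ : ¬ ∃ e, IsMatch R W₁ k e := by
    rintro ⟨e, einj, emem, eadj⟩
    refine noKMatching ht R hblue f hf_inj hf_adj u₁ ?_ e einj ?_ eadj
    · have := hu₁; rw [hS, hA] at this; exact this
    · intro p
      constructor
      · exact hW₁N (emem p)
      · have := hW₁S (emem p); rw [hS, hA] at this; exact this
  obtain ⟨Z₁, hZ₁W, hbai₁, hZ₁low, hZ₁high, hiso₁⟩ := mainZ hk R W₁ hnm₁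
  have hZ₁S : Z₁ ⊆ S := hZ₁W.trans hW₁S
  -- pick the second center: an isolated vertex of Z₁
  have hw4 : 4 * k ≤ w := by omega
  have hcond₁ : 3 * (k - 1) < Z₁.ncard := by
    rw [hW₁card] at hZ₁low
    omega
  obtain ⟨u₂, hu₂Z, hu₂iso⟩ := hiso₁ hcond₁
  have hu₂S : u₂ ∈ S := hZ₁S hu₂Z
  obtain ⟨W₂, hW₂sub, hW₂card⟩ := Set.exists_subset_card_eq (hblueN u₂ hu₂S)
  have hW₂S : W₂ ⊆ S := hW₂sub.trans Set.inter_subset_right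
  have hW₂N : W₂ ⊆ (Rᶜ).neighborSet u₂ := hW₂sub.trans Set.inter_subset_left
  have hnm₂ : ¬ ∃ e, IsMatch R W₂ k e := by
    rintro ⟨e, einj, emem, eadj⟩
    refine noKMatching ht R hblue f hf_inj hf_adj u₂ ?_ e einj ?_ eadj
    · have := hu₂S; rw [hS, hA] at this; exact this
    · intro p
      constructor
      · exact hW₂N (emem p)
      · have := hW₂S (emem p); rw [hS, hA] at this; exact this
  obtain ⟨Z₂, hZ₂W, hbai₂, hZ₂low, hZ₂high, _⟩ := mainZ hk R W₂ hnm₂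
  have hZ₂S : Z₂ ⊆ S := hZ₂W.trans hW₂S
  -- disjointness
  have hdisj : Disjoint Z₁ Z₂ := by
    rw [Set.disjoint_left]
    intro a haZ₁ haZ₂
    exact hu₂iso a haZ₁ (hW₂N (hZ₂W haZ₂))
  -- size bounds
  rw [hW₁card] at hZ₁low hZ₁high
  rw [hW₂card] at hZ₂low hZ₂high
  have hkm1 : ((k - 1 : ℕ) : ℤ) = (k : ℤ) - 1 := by
    rw [Nat.cast_sub hk]; push_cast; ring
  have bounds : ∀ Zc : ℕ, w ≤ Zc + (k - 1) → Zc ≤ w →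
      ((n : ℤ) - 2 * (k : ℤ) * (t : ℤ) + (k : ℤ) + 1 ≤ (Zc : ℤ) ∧
        (Zc : ℤ) ≤ (n : ℤ) + (k : ℤ) - 2) := by
    intro Zc hlo hhi
    have hloz : (w : ℤ) ≤ (Zc : ℤ) + ((k : ℤ) - 1) := by
      rw [← hkm1]; exact_mod_cast hlo
    have hhiz : (Zc : ℤ) ≤ (w : ℤ) := by exact_mod_cast hhi
    constructor
    · rw [hwz] at hloz; linarith
    · rw [hwz] at hhiz; linarith [htk2, hkz]
  exact ⟨Z₁, Z₂, hZ₁S, hZ₂S, hdisj, hbai₁, hbai₂,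
    bounds Z₁.ncard hZ₁low hZ₁high, bounds Z₂.ncard hZ₂low hZ₂high⟩
end

section
/- Let k ≥ 1 and t ≥ 2 be integers, let n ≥ max{12tk + 2k, 4tk^2}, and set N = 2n + t − 2. Suppose the edges of the complete graph K_N are colored red and blue so that there is no red copy of the star K_{1,n−1} and no blue copy of tF_k. Let A be the vertex set of a blue copy of (t−1)F_k and S = V(K_N) \ A. Let Z_1 and Z_2 be disjoint subsets of S such that for each i ∈ {1,2} the blue graph inside Z_i has at most 3(k−1) non-isolated vertices and maximum degree at most 2(k−1), and n − 2kt + k + 1 ≤ |Z_i| ≤ n + k − 2; let W = S \ (Z_1 ∪ Z_2). Then for each w ∈ W and each i ∈ {1,2}: if w has at least 4kt + 2k − 7 blue neighbors in Z_i, then w has at most k − 1 blue neighbors in Z_{3−i}. -/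
open SimpleGraph

set_option maxHeartbeats 1000000

lemma aux_red_deg {N n : ℕ} (hn : 2 ≤ n) (R : SimpleGraph (Fin N))
    (hred : ¬ R.ContainsCopy (completeBipartiteGraph (Fin 1) (Fin (n - 1)))) (v : Fin N) :
    (R.neighborSet v).ncard ≤ n - 2 := by
  by_contra h
  push_neg at h
  have h1 : n - 1 ≤ (R.neighborSet v).ncard := by omega
  apply hred
  classical
  have hfin : (R.neighborSet v).Finite := Set.toFinite _
  rw [Set.ncard_eq_toFinset_card _ hfin] at h1
  obtain ⟨T, hTsub, hTcard⟩ := Finset.exists_subset_card_eq h1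
  have hcard : Fintype.card ↥T = n - 1 := by simp [hTcard]
  let e : Fin (n-1) ≃ ↥T := (Fintype.equivFinOfCardEq hcard).symm
  have hmem : ∀ i : Fin (n-1), ((e i : ↥T) : Fin N) ∈ R.neighborSet v := by
    intro i
    have := hTsub (e i).2
    rwa [Set.Finite.mem_toFinset] at this
  refine ⟨Sum.elim (fun _ => v) (fun i => ((e i : ↥T) : Fin N)), ?_, ?_⟩
  · intro a b hab
    match a, b with
    | Sum.inl a, Sum.inl b => simp [Subsingleton.elim a b]
    | Sum.inl a, Sum.inr b =>
        exfalso
        simp only [Sum.elim_inl, Sum.elim_inr] at hab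
        have hm := hmem b
        rw [← hab] at hm
        exact R.loopless.irrefl v hm
    | Sum.inr a, Sum.inl b =>
        exfalso
        simp only [Sum.elim_inl, Sum.elim_inr] at hab
        have hm := hmem a
        rw [hab] at hm
        exact R.loopless.irrefl v hm
    | Sum.inr a, Sum.inr b =>
        simp only [Sum.elim_inr] at hab
        have : (e a) = (e b) := Subtype.ext hab
        exact congrArg (Sum.inr (α := Fin 1)) (e.injective this)
  · intro a b hab
    match a, b with
    | Sum.inl a, Sum.inl b => simp at hab
    | Sum.inr a, Sum.inr b => simp at hab
    | Sum.inl a, Sum.inr b => exact hmem b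
    | Sum.inr a, Sum.inl b => exact (R.adj_symm (hmem a))

lemma aux_blue_deg {N : ℕ} (R : SimpleGraph (Fin N)) (v : Fin N) :
    ((Rᶜ).neighborSet v).ncard + (R.neighborSet v).ncard + 1 = N := by
  classical
  have hunion : (R.neighborSet v) ∪ ((Rᶜ).neighborSet v) = {v}ᶜ := by
    ext u
    simp only [Set.mem_union, mem_neighborSet, compl_adj, Set.mem_compl_iff,
      Set.mem_singleton_iff]
    constructor
    · rintro (h | ⟨h, _⟩)
      · exact fun hv => R.loopless.irrefl v (hv ▸ h)
      · exact fun hv => h (hv ▸ rfl)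
    · intro h
      by_cases hadj : R.Adj v u
      · exact Or.inl hadj
      · exact Or.inr ⟨fun hh => h hh.symm, hadj⟩
  have hdisj : Disjoint (R.neighborSet v) ((Rᶜ).neighborSet v) := by
    rw [Set.disjoint_left]
    intro u hu hu'
    exact hu'.2 hu
  have h1 : (R.neighborSet v).ncard + ((Rᶜ).neighborSet v).ncard = ({v}ᶜ : Set (Fin N)).ncard := by
    rw [← Set.ncard_union_eq hdisj, hunion]
  have h2 : ({v} : Set (Fin N)).ncard + ({v}ᶜ : Set (Fin N)).ncard = N := by
    rw [Set.ncard_add_ncard_compl]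
    simp
  rw [Set.ncard_singleton] at h2
  omega

lemma aux_key (k t n N : ℕ) (hk : 1 ≤ k) (ht : 2 ≤ t)
    (hN : N = 2 * n + t - 2) (hn : 2 ≤ n)
    (R : SimpleGraph (Fin N))
    (hdeg : ∀ v : Fin N, (n : ℤ) + t - 1 ≤ (((Rᶜ).neighborSet v).ncard : ℤ))
    (hblue : ¬ (Rᶜ).ContainsCopy (copies t (fan k)))
    (f : Fin (t - 1) × Option (Fin k × Fin 2) → Fin N)
    (hf_inj : Function.Injective f)
    (hf_adj : ∀ ⦃a b⦄, (copies (t - 1) (fan k)).Adj a b → (Rᶜ).Adj (f a) (f b))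
    (A S : Set (Fin N)) (hA : A = Set.range f) (hS : S = Aᶜ)
    (Zi Zj : Set (Fin N)) (hZiS : Zi ⊆ S) (hZjS : Zj ⊆ S) (hdisj : Disjoint Zi Zj)
    (hZj_deg : ∀ v ∈ Zj, ((Rᶜ).neighborSet v ∩ Zj).ncard ≤ 2 * (k - 1))
    (hZj_ge : (n : ℤ) - 2 * (k : ℤ) * (t : ℤ) + (k : ℤ) + 1 ≤ (Zj.ncard : ℤ))
    (W : Set (Fin N)) (hW : W = S \ (Zi ∪ Zj))
    (w : Fin N) (hw : w ∈ W)
    (h1 : 4 * (k : ℤ) * (t : ℤ) + 2 * (k : ℤ) - 7 ≤ (((Rᶜ).neighborSet w ∩ Zi).ncard : ℤ)) :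
    ((Rᶜ).neighborSet w ∩ Zj).ncard ≤ k - 1 := by
  classical
  by_contra hcon
  push_neg at hcon
  have hkcard : k ≤ ((Rᶜ).neighborSet w ∩ Zj).ncard := by omega
  -- cardinality of A
  have hAcardN : A.ncard = (t - 1) * (2 * k + 1) := by
    rw [hA, ← Nat.card_coe_set_eq, Nat.card_range_of_injective hf_inj]
    simp only [Nat.card_eq_fintype_card, Fintype.card_prod, Fintype.card_option, Fintype.card_fin]
    ring
  have hAcard : (A.ncard : ℤ) = ((t : ℤ) - 1) * (2 * (k : ℤ) + 1) := by
    have h2 : ((t - 1 : ℕ) : ℤ) = (t : ℤ) - 1 := by omega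
    rw [hAcardN]; push_cast [h2]; ring
  -- partition cardinalities
  have hSA : A.ncard + S.ncard = N := by
    rw [hS]
    have := Set.ncard_add_ncard_compl A
    simpa [Nat.card_eq_fintype_card] using this
  have hZsub : Zi ∪ Zj ⊆ S := Set.union_subset hZiS hZjS
  have hWU : W.ncard + (Zi ∪ Zj).ncard = S.ncard := by
    rw [hW]; exact Set.ncard_diff_add_ncard_of_subset hZsub
  have hU : (Zi ∪ Zj).ncard = Zi.ncard + Zj.ncard := Set.ncard_union_eq hdisj
  have hpart : W.ncard + Zi.ncard + Zj.ncard + A.ncard = N := by omega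
  have hNZ : (N : ℤ) = 2 * n + (t : ℤ) - 2 := by omega
  rw [hW] at hw
  obtain ⟨hwS, hwZ⟩ := hw
  -- common-neighbour bound
  have hC : ∀ u ∈ (Rᶜ).neighborSet w ∩ Zj,
      k ≤ ((Rᶜ).neighborSet u ∩ (Rᶜ).neighborSet w ∩ Zi).ncard := by
    intro u hu
    have huj : u ∈ Zj := hu.2
    have hcover : (Rᶜ).neighborSet u ⊆
        ((Rᶜ).neighborSet u ∩ A) ∪ ((Rᶜ).neighborSet u ∩ Zi) ∪
        ((Rᶜ).neighborSet u ∩ Zj) ∪ ((Rᶜ).neighborSet u ∩ W) := by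
      intro x hx
      by_cases hxA : x ∈ A
      · exact Or.inl (Or.inl (Or.inl ⟨hx, hxA⟩))
      by_cases hxi : x ∈ Zi
      · exact Or.inl (Or.inl (Or.inr ⟨hx, hxi⟩))
      by_cases hxj : x ∈ Zj
      · exact Or.inl (Or.inr ⟨hx, hxj⟩)
      · refine Or.inr ⟨hx, ?_⟩
        rw [hW]
        exact ⟨by rw [hS]; exact hxA, by simp [hxi, hxj]⟩
    have hle : ((Rᶜ).neighborSet u).ncard ≤
        ((Rᶜ).neighborSet u ∩ A).ncard + ((Rᶜ).neighborSet u ∩ Zi).ncard +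
        ((Rᶜ).neighborSet u ∩ Zj).ncard + ((Rᶜ).neighborSet u ∩ W).ncard := by
      calc ((Rᶜ).neighborSet u).ncard
          ≤ (((Rᶜ).neighborSet u ∩ A) ∪ ((Rᶜ).neighborSet u ∩ Zi) ∪
            ((Rᶜ).neighborSet u ∩ Zj) ∪ ((Rᶜ).neighborSet u ∩ W)).ncard :=
            Set.ncard_le_ncard hcover (Set.toFinite _)
        _ ≤ (((Rᶜ).neighborSet u ∩ A) ∪ ((Rᶜ).neighborSet u ∩ Zi) ∪
            ((Rᶜ).neighborSet u ∩ Zj)).ncard + ((Rᶜ).neighborSet u ∩ W).ncard :=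
            Set.ncard_union_le _ _
        _ ≤ (((Rᶜ).neighborSet u ∩ A) ∪ ((Rᶜ).neighborSet u ∩ Zi)).ncard +
            ((Rᶜ).neighborSet u ∩ Zj).ncard + ((Rᶜ).neighborSet u ∩ W).ncard := by
            have := Set.ncard_union_le (((Rᶜ).neighborSet u ∩ A) ∪ ((Rᶜ).neighborSet u ∩ Zi))
              ((Rᶜ).neighborSet u ∩ Zj)
            omega
        _ ≤ ((Rᶜ).neighborSet u ∩ A).ncard + ((Rᶜ).neighborSet u ∩ Zi).ncard +
            ((Rᶜ).neighborSet u ∩ Zj).ncard + ((Rᶜ).neighborSet u ∩ W).ncard := by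
            have := Set.ncard_union_le ((Rᶜ).neighborSet u ∩ A) ((Rᶜ).neighborSet u ∩ Zi)
            omega
    have bA : ((Rᶜ).neighborSet u ∩ A).ncard ≤ A.ncard :=
      Set.ncard_le_ncard Set.inter_subset_right (Set.toFinite _)
    have bW : ((Rᶜ).neighborSet u ∩ W).ncard ≤ W.ncard :=
      Set.ncard_le_ncard Set.inter_subset_right (Set.toFinite _)
    have bZj : ((Rᶜ).neighborSet u ∩ Zj).ncard ≤ 2 * (k - 1) := hZj_deg u huj
    have bZjZ : (((Rᶜ).neighborSet u ∩ Zj).ncard : ℤ) ≤ 2 * (k : ℤ) - 2 := by omega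
    have hdegu := hdeg u
    -- inclusion–exclusion
    have hIE := Set.ncard_union_add_ncard_inter ((Rᶜ).neighborSet u ∩ Zi)
      ((Rᶜ).neighborSet w ∩ Zi) (Set.toFinite _) (Set.toFinite _)
    have hXY : ((Rᶜ).neighborSet u ∩ Zi) ∩ ((Rᶜ).neighborSet w ∩ Zi) =
        (Rᶜ).neighborSet u ∩ (Rᶜ).neighborSet w ∩ Zi := by
      ext x
      simp only [Set.mem_inter_iff]
      tauto
    rw [hXY] at hIE
    have hUsub : (((Rᶜ).neighborSet u ∩ Zi) ∪ ((Rᶜ).neighborSet w ∩ Zi)).ncard ≤ Zi.ncard :=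
      Set.ncard_le_ncard (Set.union_subset Set.inter_subset_right Set.inter_subset_right)
        (Set.toFinite _)
    have hkt : (2 : ℤ) ≤ (k : ℤ) * (t : ℤ) := by
      have hk' : (1 : ℤ) ≤ (k : ℤ) := by exact_mod_cast hk
      have ht' : (2 : ℤ) ≤ (t : ℤ) := by exact_mod_cast ht
      nlinarith
    have goalZ : (k : ℤ) ≤ (((Rᶜ).neighborSet u ∩ (Rᶜ).neighborSet w ∩ Zi).ncard : ℤ) := by
      have hleZ : (((Rᶜ).neighborSet u).ncard : ℤ) ≤
          (((Rᶜ).neighborSet u ∩ A).ncard : ℤ) + (((Rᶜ).neighborSet u ∩ Zi).ncard : ℤ) +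
          (((Rᶜ).neighborSet u ∩ Zj).ncard : ℤ) + (((Rᶜ).neighborSet u ∩ W).ncard : ℤ) := by
        exact_mod_cast hle
      have hIEZ : ((((Rᶜ).neighborSet u ∩ Zi) ∪ ((Rᶜ).neighborSet w ∩ Zi)).ncard : ℤ) +
          (((Rᶜ).neighborSet u ∩ (Rᶜ).neighborSet w ∩ Zi).ncard : ℤ) =
          (((Rᶜ).neighborSet u ∩ Zi).ncard : ℤ) + (((Rᶜ).neighborSet w ∩ Zi).ncard : ℤ) := by
        exact_mod_cast hIE
      have hUsubZ : ((((Rᶜ).neighborSet u ∩ Zi) ∪ ((Rᶜ).neighborSet w ∩ Zi)).ncard : ℤ) ≤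
          (Zi.ncard : ℤ) := by exact_mod_cast hUsub
      have bAZ : (((Rᶜ).neighborSet u ∩ A).ncard : ℤ) ≤ (A.ncard : ℤ) := by exact_mod_cast bA
      have bWZ : (((Rᶜ).neighborSet u ∩ W).ncard : ℤ) ≤ (W.ncard : ℤ) := by exact_mod_cast bW
      have hpartZ : (W.ncard : ℤ) + (Zi.ncard : ℤ) + (Zj.ncard : ℤ) + (A.ncard : ℤ) = (N : ℤ) := by
        exact_mod_cast hpart
      linarith
    exact_mod_cast goalZ
  -- choose U : k blue neighbours of w in Zj
  have hFfin : ((Rᶜ).neighborSet w ∩ Zj).Finite := Set.toFinite _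
  rw [Set.ncard_eq_toFinset_card _ hFfin] at hkcard
  obtain ⟨U, hUsub, hUcard⟩ := Finset.exists_subset_card_eq hkcard
  have hUmem : ∀ x ∈ U, x ∈ (Rᶜ).neighborSet w ∩ Zj := fun x hx => by
    have := hUsub hx; rwa [Set.Finite.mem_toFinset] at this
  -- Hall's theorem for distinct common neighbours
  let Cs : ↥U → Finset (Fin N) := fun u =>
    (Set.toFinite ((Rᶜ).neighborSet ↑u ∩ (Rᶜ).neighborSet w ∩ Zi)).toFinset
  have hCs_card : ∀ u : ↥U, k ≤ (Cs u).card := by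
    intro u
    have h := hC ↑u (hUmem _ u.2)
    rwa [Set.ncard_eq_toFinset_card _ (Set.toFinite _)] at h
  have hcardU : Fintype.card ↥U = k := by simp [hUcard]
  have hhall : ∀ s : Finset ↥U, s.card ≤ (s.biUnion Cs).card := by
    intro s
    rcases s.eq_empty_or_nonempty with rfl | ⟨u, hu⟩
    · simp
    · have hb : Cs u ⊆ s.biUnion Cs := Finset.subset_biUnion_of_mem Cs hu
      have h2 : k ≤ (s.biUnion Cs).card := le_trans (hCs_card u) (Finset.card_le_card hb)
      have h3 : s.card ≤ Fintype.card ↥U := Finset.card_le_univ s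
      omega
  obtain ⟨vv, hvv_inj, hvv_mem⟩ :=
    (Finset.all_card_le_biUnion_card_iff_exists_injective Cs).mp hhall
  let e : Fin k ≃ ↥U := (Fintype.equivFinOfCardEq hcardU).symm
  let uF : Fin k → Fin N := fun i => ((e i : ↥U) : Fin N)
  let vF : Fin k → Fin N := fun i => vv (e i)
  have huF_mem : ∀ i, uF i ∈ (Rᶜ).neighborSet w ∩ Zj := fun i => hUmem _ (e i).2
  have hvF_mem : ∀ i, vF i ∈ (Rᶜ).neighborSet (uF i) ∩ (Rᶜ).neighborSet w ∩ Zi := by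
    intro i
    have h := hvv_mem (e i)
    rwa [Set.Finite.mem_toFinset] at h
  have huF_inj : Function.Injective uF := fun i j h => e.injective (Subtype.ext h)
  have hvF_inj : Function.Injective vF := fun i j h => e.injective (hvv_inj h)
  -- the new fan
  let nf : Option (Fin k × Fin 2) → Fin N := fun o =>
    o.elim w (fun p => if p.2 = 0 then uF p.1 else vF p.1)
  have hwi : w ∉ Zi := fun h => hwZ (Or.inl h)
  have hwj : w ∉ Zj := fun h => hwZ (Or.inr h)
  have hZiZj : ∀ x, x ∈ Zi → x ∉ Zj := fun x hx hx' => (Set.disjoint_left.mp hdisj) hx hx'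
  have hnfS : ∀ o, nf o ∈ S := by
    intro o
    match o with
    | none => exact hwS
    | some (i, a) =>
      by_cases ha : a = 0
      · simpa [nf, ha] using hZjS (huF_mem i).2
      · simpa [nf, ha] using hZiS (hvF_mem i).2
  have hfin2 : ∀ x : Fin 2, x ≠ 0 → x = 1 := by decide
  have hnf_inj : Function.Injective nf := by
    intro o o' h
    match o, o' with
    | none, none => rfl
    | none, some (i, a) =>
      exfalso
      by_cases ha : a = 0
      · simp [nf, ha] at h
        exact hwj (h ▸ (huF_mem i).2)
      · simp [nf, ha] at h
        exact hwi (h ▸ (hvF_mem i).2)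
    | some (i, a), none =>
      exfalso
      by_cases ha : a = 0
      · simp [nf, ha] at h
        exact hwj (h ▸ (huF_mem i).2)
      · simp [nf, ha] at h
        exact hwi (h ▸ (hvF_mem i).2)
    | some (i, a), some (i', a') =>
      by_cases ha : a = 0 <;> by_cases ha' : a' = 0
      · simp [nf, ha, ha'] at h
        rw [ha, ha', huF_inj h]
      · exfalso
        simp [nf, ha, ha'] at h
        exact hZiZj _ (hvF_mem i').2 (h ▸ (huF_mem i).2)
      · exfalso
        simp [nf, ha, ha'] at h
        exact hZiZj _ (hvF_mem i).2 (h ▸ (huF_mem i').2)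
      · simp [nf, ha, ha'] at h
        rw [hfin2 a ha, hfin2 a' ha', hvF_inj h]
  have hnf_adj1 : ∀ x y : Option (Fin k × Fin 2),
      (x = none ∨ ∃ i a b, x = some (i, a) ∧ y = some (i, b)) → x ≠ y →
      (Rᶜ).Adj (nf x) (nf y) := by
    intro x y hrel hne
    rcases hrel with rfl | ⟨i, a, b, rfl, rfl⟩
    · match y with
      | none => exact absurd rfl hne
      | some (i, a) =>
        by_cases ha : a = 0
        · simpa [nf, ha] using (huF_mem i).1
        · simpa [nf, ha] using (hvF_mem i).1.2
    · have hab : a ≠ b := fun h => hne (by rw [h])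
      have hadj : (Rᶜ).Adj (uF i) (vF i) := (hvF_mem i).1.1
      by_cases ha : a = 0
      · have hb : ¬ b = 0 := fun h => hab (by rw [ha, h])
        simpa [nf, ha, hb] using hadj
      · have hb : b = 0 := by
          by_contra hb
          exact hab ((hfin2 a ha).trans (hfin2 b hb).symm)
        simpa [nf, ha, hb] using hadj.symm
  -- assemble the blue copy of t·F_k
  apply hblue
  have ht1 : 1 ≤ t := by omega
  refine ⟨fun p => if h : (p.1 : ℕ) < t - 1 then f (⟨p.1, h⟩, p.2) else nf p.2, ?_, ?_⟩
  · intro p q hpq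
    by_cases hp : (p.1 : ℕ) < t - 1 <;> by_cases hq : (q.1 : ℕ) < t - 1
    · simp only [dif_pos hp, dif_pos hq] at hpq
      have heq := hf_inj hpq
      have h1 := (Prod.ext_iff.mp heq).1
      have h2 := (Prod.ext_iff.mp heq).2
      have h3 : (p.1 : ℕ) = (q.1 : ℕ) := by simpa using congrArg Fin.val h1
      exact Prod.ext (Fin.ext h3) h2
    · exfalso
      simp only [dif_pos hp, dif_neg hq] at hpq
      have hmem1 : f (⟨(p.1 : ℕ), hp⟩, p.2) ∈ A := hA ▸ Set.mem_range_self _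
      rw [hpq] at hmem1
      have hmem2 := hnfS q.2
      rw [hS] at hmem2
      exact hmem2 hmem1
    · exfalso
      simp only [dif_neg hp, dif_pos hq] at hpq
      have hmem1 : f (⟨(q.1 : ℕ), hq⟩, q.2) ∈ A := hA ▸ Set.mem_range_self _
      rw [← hpq] at hmem1
      have hmem2 := hnfS p.2
      rw [hS] at hmem2
      exact hmem2 hmem1
    · simp only [dif_neg hp, dif_neg hq] at hpq
      have h2 := hnf_inj hpq
      have h1 : (p.1 : ℕ) = (q.1 : ℕ) := by
        have := p.1.isLt; have := q.1.isLt; omega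
      exact Prod.ext (Fin.ext h1) h2
  · intro p q hpq
    obtain ⟨h1, h2⟩ := hpq
    have h2' := h2
    unfold fan at h2'
    rw [SimpleGraph.fromRel_adj] at h2'
    obtain ⟨hne, hrel⟩ := h2'
    by_cases hp : (p.1 : ℕ) < t - 1
    · have hq : (q.1 : ℕ) < t - 1 := by rw [← h1]; exact hp
      dsimp only
      rw [dif_pos hp, dif_pos hq]
      refine hf_adj ⟨?_, h2⟩
      apply Fin.ext
      simpa using congrArg Fin.val h1
    · have hq : ¬ (q.1 : ℕ) < t - 1 := by rw [← h1]; exact hp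
      dsimp only
      rw [dif_neg hp, dif_neg hq]
      rcases hrel with h | h
      · exact hnf_adj1 _ _ h hne
      · exact ((Rᶜ).symm.symm _ _ (hnf_adj1 _ _ h (Ne.symm hne)))

/-- Claim 3 in the proof of Theorem 6: for `w ∈ W = S \ (Z₁ ∪ Z₂)`, if `w` has at least
`4kt + 2k − 7` blue neighbors in `Zᵢ`, then it has at most `k − 1` blue neighbors in
`Z_{3−i}`. -/
theorem W_blue_neighbors (k t n N : ℕ) (hk : 1 ≤ k) (ht : 2 ≤ t)
    (hn1 : 12 * t * k + 2 * k ≤ n) (hn2 : 4 * t * k ^ 2 ≤ n)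
    (hN : N = 2 * n + t - 2)
    (R : SimpleGraph (Fin N))
    (hred : ¬ R.ContainsCopy (completeBipartiteGraph (Fin 1) (Fin (n - 1))))
    (hblue : ¬ (Rᶜ).ContainsCopy (copies t (fan k)))
    (f : Fin (t - 1) × Option (Fin k × Fin 2) → Fin N)
    (hf_inj : Function.Injective f)
    (hf_adj : ∀ ⦃a b⦄, (copies (t - 1) (fan k)).Adj a b → (Rᶜ).Adj (f a) (f b))
    (A S : Set (Fin N)) (hA : A = Set.range f) (hS : S = Aᶜ)
    (Z₁ Z₂ : Set (Fin N)) (hZ₁S : Z₁ ⊆ S) (hZ₂S : Z₂ ⊆ S) (hdisj : Disjoint Z₁ Z₂)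
    (hZ₁ : blueAlmostIndependent R k Z₁) (hZ₂ : blueAlmostIndependent R k Z₂)
    (hZ₁card : (n : ℤ) - 2 * (k : ℤ) * (t : ℤ) + (k : ℤ) + 1 ≤ (Z₁.ncard : ℤ) ∧
      (Z₁.ncard : ℤ) ≤ (n : ℤ) + (k : ℤ) - 2)
    (hZ₂card : (n : ℤ) - 2 * (k : ℤ) * (t : ℤ) + (k : ℤ) + 1 ≤ (Z₂.ncard : ℤ) ∧
      (Z₂.ncard : ℤ) ≤ (n : ℤ) + (k : ℤ) - 2)
    (W : Set (Fin N)) (hW : W = S \ (Z₁ ∪ Z₂)) :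
    ∀ w ∈ W,
      ((4 * (k : ℤ) * (t : ℤ) + 2 * (k : ℤ) - 7 ≤ (((Rᶜ).neighborSet w ∩ Z₁).ncard : ℤ) →
          ((Rᶜ).neighborSet w ∩ Z₂).ncard ≤ k - 1) ∧
        (4 * (k : ℤ) * (t : ℤ) + 2 * (k : ℤ) - 7 ≤ (((Rᶜ).neighborSet w ∩ Z₂).ncard : ℤ) →
          ((Rᶜ).neighborSet w ∩ Z₁).ncard ≤ k - 1)) := by
  have hn : 2 ≤ n := by nlinarith
  have hdeg : ∀ v : Fin N, (n : ℤ) + t - 1 ≤ (((Rᶜ).neighborSet v).ncard : ℤ) := by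
    intro v
    have hb := aux_blue_deg R v
    have hr := aux_red_deg hn R hred v
    omega
  intro w hw
  constructor
  · intro h1
    exact aux_key k t n N hk ht hN hn R hdeg hblue f hf_inj hf_adj A S hA hS
      Z₁ Z₂ hZ₁S hZ₂S hdisj hZ₂.2 hZ₂card.1 W hW w hw h1
  · intro h1
    refine aux_key k t n N hk ht hN hn R hdeg hblue f hf_inj hf_adj A S hA hS
      Z₂ Z₁ hZ₂S hZ₁S hdisj.symm hZ₁.2 hZ₁card.1 W ?_ w hw h1
    rw [hW, Set.union_comm]
end

section
/- Let k ≥ 1 and t ≥ 2 be integers, let n ≥ max{12tk + 2k, 4tk^2}, and set N = 2n + t − 2. Suppose the edges of the complete graph K_N are colored red and blue so that there is no red copy of the star K_{1,n−1} and no blue copy of tF_k. Let A be the vertex set of a blue copy of (t−1)F_k and S = V(K_N) \ A. Let S_1, S_2 be disjoint subsets of S such that every vertex of S_1 has at least n − 4kt + 5 blue neighbors in S_2 and every vertex of S_2 has at least n − 4kt + 5 blue neighbors in S_1. Then for each of the t − 1 vertex-disjoint blue copies of F_k spanning A, at most one vertex of that copy has at least 2k blue neighbors in S_1 and at least 2k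 blue neighbors in S_2. -/
open SimpleGraph

/-- the vertex map of a fan: center `c`, pairs `(p i, q i)`. -/
def fanVert {V : Type*} {k : ℕ} (c : V) (p q : Fin k → V) : Option (Fin k × Fin 2) → V
  | none => c
  | some (i, z) => if z = 0 then p i else q i

lemma fin2_cases {z w : Fin 2} (h : z ≠ w) : z = 0 ∧ w = 1 ∨ z = 1 ∧ w = 0 := by
  revert h; revert z w; decide

lemma fanVert_adj {V : Type*} {k : ℕ} (G : SimpleGraph V) (c : V) (p q : Fin k → V)
    (hc1 : ∀ i, G.Adj c (p i)) (hc2 : ∀ i, G.Adj c (q i)) (hpq : ∀ i, G.Adj (p i) (q i)) :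
    ∀ {x y}, (fan k).Adj x y → G.Adj (fanVert c p q x) (fanVert c p q y) := by
  have key : ∀ x y, x ≠ y →
      (x = none ∨ ∃ i a b, x = some (i, a) ∧ y = some (i, b)) →
      G.Adj (fanVert c p q x) (fanVert c p q y) := by
    intro x y hne hr
    rcases hr with rfl | ⟨i, z, w, rfl, rfl⟩
    · match y with
      | none => exact absurd rfl hne
      | some (i, z) =>
        show G.Adj c (if z = 0 then p i else q i)
        split_ifs
        · exact hc1 i
        · exact hc2 i
    · have hzw : z ≠ w := by rintro rfl; exact hne rfl
      rcases fin2_cases hzw with ⟨rfl, rfl⟩ | ⟨rfl, rfl⟩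
      · show G.Adj (if (0:Fin 2) = 0 then p i else q i) (if (1:Fin 2) = 0 then p i else q i)
        rw [if_pos rfl, if_neg (by decide)]
        exact hpq i
      · show G.Adj (if (1:Fin 2) = 0 then p i else q i) (if (0:Fin 2) = 0 then p i else q i)
        rw [if_pos rfl, if_neg (by decide)]
        exact (hpq i).symm
  intro x y hxy
  rw [fan, SimpleGraph.fromRel_adj] at hxy
  obtain ⟨hne, hr | hr⟩ := hxy
  · exact key x y hne hr
  · exact (key y x hne.symm hr).symm

lemma fanVert_cases {V : Type*} {k : ℕ} (c : V) (p q : Fin k → V) (x : Option (Fin k × Fin 2)) :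
    fanVert c p q x = c ∨ (∃ i, fanVert c p q x = p i) ∨ (∃ i, fanVert c p q x = q i) := by
  match x with
  | none => exact Or.inl rfl
  | some (i, z) =>
    show (if z = 0 then p i else q i) = c ∨ (∃ i', (if z = 0 then p i else q i) = p i') ∨
      (∃ i', (if z = 0 then p i else q i) = q i')
    split_ifs
    · exact Or.inr (Or.inl ⟨i, rfl⟩)
    · exact Or.inr (Or.inr ⟨i, rfl⟩)

lemma fanVert_inj {V : Type*} {k : ℕ} (c : V) (p q : Fin k → V) (P Q : Set V)
    (hp : ∀ i, p i ∈ P) (hq : ∀ i, q i ∈ Q) (hcP : c ∉ P) (hcQ : c ∉ Q)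
    (hPQ : Disjoint P Q) (hip : Function.Injective p) (hiq : Function.Injective q) :
    Function.Injective (fanVert c p q) := by
  intro x y h
  match x, y with
  | none, none => rfl
  | none, some (i, z) =>
    exfalso
    have : c = if z = 0 then p i else q i := h
    split_ifs at this
    · exact hcP (this ▸ hp i)
    · exact hcQ (this ▸ hq i)
  | some (i, z), none =>
    exfalso
    have : (if z = 0 then p i else q i) = c := h
    split_ifs at this
    · exact hcP (this ▸ hp i)
    · exact hcQ (this ▸ hq i)
  | some (i, z), some (i', z') =>
    have h' : (if z = 0 then p i else q i) = (if z' = 0 then p i' else q i') := h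
    split_ifs at h' with h1 h2 h2
    · rw [h1, h2, hip h']
    · exact absurd (h' ▸ hp i) (Set.disjoint_left.1 hPQ.symm (hq i'))
    · exact absurd (h' ▸ hq i) (Set.disjoint_left.1 hPQ (hp i'))
    · have hii : i = i' := hiq h'
      have hzz : z = z' := by omega
      rw [hii, hzz]

/-- the glued vertex map for `t` fans: slot `j` gets `va`, the last slot gets `vb`,
the other slots keep `f`. -/
def glueMap {V : Type*} {k t : ℕ} (va vb : Option (Fin k × Fin 2) → V) (j : Fin (t - 1))
    (f : Fin (t - 1) × Option (Fin k × Fin 2) → V) : Fin t × Option (Fin k × Fin 2) → V :=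
  fun z =>
    if h : (z.1 : ℕ) < t - 1 then
      (if (⟨z.1, h⟩ : Fin (t - 1)) = j then va z.2 else f (⟨z.1, h⟩, z.2))
    else vb z.2

/-- Claim 5 in the proof of Theorem 6: for each of the `t − 1` vertex-disjoint blue copies
of `F_k` spanning `A`, at most one vertex of that copy has at least `2k` blue neighbors in
both `S₁` and `S₂`. -/
theorem at_most_one_special_vertex (k t n N : ℕ) (hk : 1 ≤ k) (ht : 2 ≤ t)
    (hn1 : 12 * t * k + 2 * k ≤ n) (hn2 : 4 * t * k ^ 2 ≤ n)
    (hN : N = 2 * n + t - 2)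
    (R : SimpleGraph (Fin N))
    (hred : ¬ R.ContainsCopy (completeBipartiteGraph (Fin 1) (Fin (n - 1))))
    (hblue : ¬ (Rᶜ).ContainsCopy (copies t (fan k)))
    (f : Fin (t - 1) × Option (Fin k × Fin 2) → Fin N)
    (hf_inj : Function.Injective f)
    (hf_adj : ∀ ⦃a b⦄, (copies (t - 1) (fan k)).Adj a b → (Rᶜ).Adj (f a) (f b))
    (A S : Set (Fin N)) (hA : A = Set.range f) (hS : S = Aᶜ)
    (S₁ S₂ : Set (Fin N)) (hS₁S : S₁ ⊆ S) (hS₂S : S₂ ⊆ S) (hSdisj : Disjoint S₁ S₂)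
    (hS₁deg : ∀ v ∈ S₁,
      (n : ℤ) - 4 * (k : ℤ) * (t : ℤ) + 5 ≤ (((Rᶜ).neighborSet v ∩ S₂).ncard : ℤ))
    (hS₂deg : ∀ v ∈ S₂,
      (n : ℤ) - 4 * (k : ℤ) * (t : ℤ) + 5 ≤ (((Rᶜ).neighborSet v ∩ S₁).ncard : ℤ)) :
    ∀ j : Fin (t - 1),
      Set.Subsingleton {a : Fin N | ∃ x : Option (Fin k × Fin 2), a = f (j, x) ∧
        2 * k ≤ (((Rᶜ).neighborSet a ∩ S₁).ncard) ∧
        2 * k ≤ (((Rᶜ).neighborSet a ∩ S₂).ncard)} := by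
  intro j a ha b hb
  by_contra hab
  obtain ⟨xa, hax, ha1, ha2⟩ := ha
  obtain ⟨xb, hbx, hb1, hb2⟩ := hb
  have hNZ : (N : ℤ) = 2 * n + t - 2 := by omega
  have hn1Z : 12 * (t : ℤ) * k + 2 * k ≤ (n : ℤ) := by exact_mod_cast hn1
  have hkZ : (1 : ℤ) ≤ (k : ℤ) := by exact_mod_cast hk
  have htZ : (2 : ℤ) ≤ (t : ℤ) := by exact_mod_cast ht
  have hktc : (k : ℤ) * t = (t : ℤ) * k := mul_comm _ _
  have hktb : 2 * (k : ℤ) ≤ (k : ℤ) * t := by nlinarith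
  -- membership in A
  have haA : a ∈ A := by rw [hA, hax]; exact Set.mem_range_self _
  have hbA : b ∈ A := by rw [hA, hbx]; exact Set.mem_range_self _
  have hnotA₁ : ∀ v ∈ S₁, v ∉ A := fun v hv hvA => (hS ▸ hS₁S hv) hvA
  have hnotA₂ : ∀ v ∈ S₂, v ∉ A := fun v hv hvA => (hS ▸ hS₂S hv) hvA
  -- every vertex has small red degree
  have hred' : ∀ w : Fin N, ((R.neighborSet w).ncard : ℤ) ≤ (n : ℤ) - 2 := by
    intro w
    by_contra hc
    push_neg at hc
    have hge : n - 1 ≤ ((R.neighborSet w).toFinite.toFinset).card := by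
      rw [← Set.ncard_eq_toFinset_card _ (R.neighborSet w).toFinite]; omega
    obtain ⟨u, huF, hucard⟩ := Finset.exists_subset_card_eq hge
    have hmem : ∀ i : Fin (n - 1),
        ((u.equivFin.symm (Fin.cast hucard.symm i) : u) : Fin N) ∈ R.neighborSet w := by
      intro i
      exact ((R.neighborSet w).toFinite.mem_toFinset).1
        (huF (u.equivFin.symm (Fin.cast hucard.symm i)).2)
    apply hred
    refine ⟨Sum.elim (fun _ => w)
      (fun i => ((u.equivFin.symm (Fin.cast hucard.symm i) : u) : Fin N)), ?_, ?_⟩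
    · rintro (x | x) (y | y) h
      · exact congrArg Sum.inl (Subsingleton.elim x y)
      · exact absurd h (R.ne_of_adj (hmem y))
      · exact absurd h (R.ne_of_adj (hmem x)).symm
      · refine congrArg Sum.inr ?_
        have h1 : u.equivFin.symm (Fin.cast hucard.symm x) =
            u.equivFin.symm (Fin.cast hucard.symm y) := Subtype.coe_injective h
        have h2 := u.equivFin.symm.injective h1
        have h3 : (Fin.cast hucard.symm x).val = (Fin.cast hucard.symm y).val :=
          congrArg Fin.val h2
        simp only [Fin.coe_cast] at h3
        exact Fin.ext h3
    · rintro (x | x) (y | y) hxy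
      · simp at hxy
      · exact hmem y
      · exact (hmem x).symm
      · simp at hxy
  -- every vertex has large blue degree
  have hbdeg : ∀ w : Fin N, (n : ℤ) + t - 1 ≤ (((Rᶜ).neighborSet w).ncard : ℤ) := by
    intro w
    have h1 : (Rᶜ).neighborSet w = (insert w (R.neighborSet w))ᶜ := by
      ext v
      simp only [mem_neighborSet, compl_adj, Set.mem_compl_iff, Set.mem_insert_iff,
        mem_neighborSet, not_or]
      constructor
      · rintro ⟨h1, h2⟩; exact ⟨fun hh => h1 hh.symm, h2⟩
      · rintro ⟨h1, h2⟩; exact ⟨fun hh => h1 hh.symm, h2⟩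
    have h2 : (insert w (R.neighborSet w)).ncard = (R.neighborSet w).ncard + 1 :=
      Set.ncard_insert_of_notMem (fun hm => R.irrefl hm) (Set.toFinite _)
    have h3 := Set.ncard_add_ncard_compl (insert w (R.neighborSet w))
    have h4 := hred' w
    have h5 : Nat.card (Fin N) = N := by simp
    rw [h1]
    omega
  -- S₁ and S₂ are nonempty
  have hS₁ne : S₁.Nonempty := by
    have : ((Rᶜ).neighborSet a ∩ S₁).Nonempty :=
      Set.nonempty_of_ncard_ne_zero (by omega)
    exact ⟨this.choose, this.choose_spec.2⟩
  have hS₂ne : S₂.Nonempty := by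
    have : ((Rᶜ).neighborSet a ∩ S₂).Nonempty :=
      Set.nonempty_of_ncard_ne_zero (by omega)
    exact ⟨this.choose, this.choose_spec.2⟩
  -- size lower bounds
  have hs2low : (n : ℤ) - 4 * k * t + 5 ≤ (S₂.ncard : ℤ) := by
    obtain ⟨v, hv⟩ := hS₁ne
    calc (n : ℤ) - 4 * k * t + 5 ≤ (((Rᶜ).neighborSet v ∩ S₂).ncard : ℤ) := hS₁deg v hv
    _ ≤ (S₂.ncard : ℤ) := by
        exact_mod_cast Set.ncard_le_ncard Set.inter_subset_right (Set.toFinite _)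
  have hs1low : (n : ℤ) - 4 * k * t + 5 ≤ (S₁.ncard : ℤ) := by
    obtain ⟨v, hv⟩ := hS₂ne
    calc (n : ℤ) - 4 * k * t + 5 ≤ (((Rᶜ).neighborSet v ∩ S₁).ncard : ℤ) := hS₂deg v hv
    _ ≤ (S₁.ncard : ℤ) := by
        exact_mod_cast Set.ncard_le_ncard Set.inter_subset_right (Set.toFinite _)
  -- missing-neighbour bounds
  have hmiss₁ : ∀ q ∈ S₂, ∀ X ⊆ S₁, (X.ncard : ℤ) - S₁.ncard + ((n : ℤ) - 4 * k * t + 5) ≤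
      ((X ∩ (Rᶜ).neighborSet q).ncard : ℤ) := by
    intro q hq X hX
    have e1 := Set.ncard_inter_add_ncard_diff_eq_ncard X ((Rᶜ).neighborSet q) (Set.toFinite _)
    have e2 := Set.ncard_inter_add_ncard_diff_eq_ncard S₁ ((Rᶜ).neighborSet q) (Set.toFinite _)
    have e3 : (X \ (Rᶜ).neighborSet q).ncard ≤ (S₁ \ (Rᶜ).neighborSet q).ncard :=
      Set.ncard_le_ncard (Set.diff_subset_diff_left hX) (Set.toFinite _)
    have e4 : (n : ℤ) - 4 * k * t + 5 ≤ ((S₁ ∩ (Rᶜ).neighborSet q).ncard : ℤ) := by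
      rw [Set.inter_comm]; exact hS₂deg q hq
    push_cast at e1 e2 e3 ⊢
    linarith
  have hmiss₂ : ∀ p ∈ S₁, ∀ Y ⊆ S₂, (Y.ncard : ℤ) - S₂.ncard + ((n : ℤ) - 4 * k * t + 5) ≤
      ((Y ∩ (Rᶜ).neighborSet p).ncard : ℤ) := by
    intro p hp Y hY
    have e1 := Set.ncard_inter_add_ncard_diff_eq_ncard Y ((Rᶜ).neighborSet p) (Set.toFinite _)
    have e2 := Set.ncard_inter_add_ncard_diff_eq_ncard S₂ ((Rᶜ).neighborSet p) (Set.toFinite _)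
    have e3 : (Y \ (Rᶜ).neighborSet p).ncard ≤ (S₂ \ (Rᶜ).neighborSet p).ncard :=
      Set.ncard_le_ncard (Set.diff_subset_diff_left hY) (Set.toFinite _)
    have e4 : (n : ℤ) - 4 * k * t + 5 ≤ ((S₂ ∩ (Rᶜ).neighborSet p).ncard : ℤ) := by
      rw [Set.inter_comm]; exact hS₁deg p hp
    push_cast at e1 e2 e3 ⊢
    linarith
  -- the dichotomy
  have dich : ∀ w ∈ A,
      2 * (k : ℤ) + 1 + ((S₁.ncard : ℤ) - ((n : ℤ) - 4 * k * t + 5)) ≤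
        (((Rᶜ).neighborSet w ∩ S₁).ncard : ℤ) ∨
      2 * (k : ℤ) + 1 + ((S₂.ncard : ℤ) - ((n : ℤ) - 4 * k * t + 5)) ≤
        (((Rᶜ).neighborSet w ∩ S₂).ncard : ℤ) := by
    intro w hwA
    have hw12 : w ∉ S₁ ∪ S₂ := by
      rintro (hw | hw)
      · exact hnotA₁ w hw hwA
      · exact hnotA₂ w hw hwA
    have e1 := Set.ncard_inter_add_ncard_diff_eq_ncard ((Rᶜ).neighborSet w) (S₁ ∪ S₂)
      (Set.toFinite _)
    have e2 : (Rᶜ).neighborSet w ∩ (S₁ ∪ S₂) =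
        ((Rᶜ).neighborSet w ∩ S₁) ∪ ((Rᶜ).neighborSet w ∩ S₂) :=
      Set.inter_union_distrib_left _ _ _
    have e2' : ((Rᶜ).neighborSet w ∩ (S₁ ∪ S₂)).ncard =
        ((Rᶜ).neighborSet w ∩ S₁).ncard + ((Rᶜ).neighborSet w ∩ S₂).ncard := by
      rw [e2]
      exact Set.ncard_union_eq (hSdisj.mono Set.inter_subset_right Set.inter_subset_right)
        (Set.toFinite _) (Set.toFinite _)
    have e3 : ((Rᶜ).neighborSet w \ (S₁ ∪ S₂)) ⊆ (insert w (S₁ ∪ S₂))ᶜ := by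
      rintro x ⟨hx1, hx2⟩
      simp only [Set.mem_compl_iff, Set.mem_insert_iff, not_or]
      exact ⟨fun hxw => ((Rᶜ).ne_of_adj hx1) hxw.symm, hx2⟩
    have e3' : ((Rᶜ).neighborSet w \ (S₁ ∪ S₂)).ncard ≤ ((insert w (S₁ ∪ S₂))ᶜ).ncard :=
      Set.ncard_le_ncard e3 (Set.toFinite _)
    have e4 := Set.ncard_add_ncard_compl (insert w (S₁ ∪ S₂))
    have e5 : (insert w (S₁ ∪ S₂)).ncard = (S₁ ∪ S₂).ncard + 1 :=
      Set.ncard_insert_of_notMem hw12 (Set.toFinite _)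
    have e6 : (S₁ ∪ S₂).ncard = S₁.ncard + S₂.ncard :=
      Set.ncard_union_eq hSdisj (Set.toFinite _) (Set.toFinite _)
    have e7 : Nat.card (Fin N) = N := by simp
    have e8 := hbdeg w
    by_contra hcon
    push_neg at hcon
    obtain ⟨hc1, hc2⟩ := hcon
    have hXY : (S₁.ncard : ℤ) + S₂.ncard - n + 2 ≤
        (((Rᶜ).neighborSet w ∩ S₁).ncard : ℤ) + (((Rᶜ).neighborSet w ∩ S₂).ncard : ℤ) := by
      omega
    linarith
  -- one greedy step
  have step : ∀ w ∈ A, ∀ U₁ U₂ : Set (Fin N), (U₁.ncard : ℤ) ≤ 2 * k - 1 →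
      (U₂.ncard : ℤ) ≤ 2 * k - 1 →
      2 * k ≤ ((Rᶜ).neighborSet w ∩ S₁).ncard → 2 * k ≤ ((Rᶜ).neighborSet w ∩ S₂).ncard →
      ∃ p q : Fin N, p ∈ S₁ ∧ p ∉ U₁ ∧ q ∈ S₂ ∧ q ∉ U₂ ∧
        (Rᶜ).Adj w p ∧ (Rᶜ).Adj w q ∧ (Rᶜ).Adj p q := by
    intro w hwA U₁ U₂ hU₁ hU₂ hw1 hw2
    rcases dich w hwA with hX | hY
    · -- X is big: pick q ∈ Y \ U₂ first
      have f1 := Set.ncard_inter_add_ncard_diff_eq_ncard ((Rᶜ).neighborSet w ∩ S₂) U₂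
        (Set.toFinite _)
      have f2 : (((Rᶜ).neighborSet w ∩ S₂) ∩ U₂).ncard ≤ U₂.ncard :=
        Set.ncard_le_ncard Set.inter_subset_right (Set.toFinite _)
      have hYne : (((Rᶜ).neighborSet w ∩ S₂) \ U₂).Nonempty :=
        Set.nonempty_of_ncard_ne_zero (by omega)
      obtain ⟨q, ⟨hqNb, hq2⟩, hqU⟩ := hYne
      have g0 := hmiss₁ q hq2 ((Rᶜ).neighborSet w ∩ S₁) Set.inter_subset_right
      have g1 := Set.ncard_inter_add_ncard_diff_eq_ncard
        (((Rᶜ).neighborSet w ∩ S₁) ∩ (Rᶜ).neighborSet q) U₁ (Set.toFinite _)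
      have g2 : ((((Rᶜ).neighborSet w ∩ S₁) ∩ (Rᶜ).neighborSet q) ∩ U₁).ncard ≤ U₁.ncard :=
        Set.ncard_le_ncard Set.inter_subset_right (Set.toFinite _)
      have hPne : ((((Rᶜ).neighborSet w ∩ S₁) ∩ (Rᶜ).neighborSet q) \ U₁).Nonempty :=
        Set.nonempty_of_ncard_ne_zero (by omega)
      obtain ⟨p, ⟨⟨hpNb, hp1⟩, hqp⟩, hpU⟩ := hPne
      exact ⟨p, q, hp1, hpU, hq2, hqU, hpNb, hqNb, ((hqp : (Rᶜ).Adj q p)).symm⟩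
    · -- Y is big: pick p ∈ X \ U₁ first
      have f1 := Set.ncard_inter_add_ncard_diff_eq_ncard ((Rᶜ).neighborSet w ∩ S₁) U₁
        (Set.toFinite _)
      have f2 : (((Rᶜ).neighborSet w ∩ S₁) ∩ U₁).ncard ≤ U₁.ncard :=
        Set.ncard_le_ncard Set.inter_subset_right (Set.toFinite _)
      have hXne : (((Rᶜ).neighborSet w ∩ S₁) \ U₁).Nonempty :=
        Set.nonempty_of_ncard_ne_zero (by omega)
      obtain ⟨p, ⟨hpNb, hp1⟩, hpU⟩ := hXne
      have g0 := hmiss₂ p hp1 ((Rᶜ).neighborSet w ∩ S₂) Set.inter_subset_right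
      have g1 := Set.ncard_inter_add_ncard_diff_eq_ncard
        (((Rᶜ).neighborSet w ∩ S₂) ∩ (Rᶜ).neighborSet p) U₂ (Set.toFinite _)
      have g2 : ((((Rᶜ).neighborSet w ∩ S₂) ∩ (Rᶜ).neighborSet p) ∩ U₂).ncard ≤ U₂.ncard :=
        Set.ncard_le_ncard Set.inter_subset_right (Set.toFinite _)
      have hQne : ((((Rᶜ).neighborSet w ∩ S₂) ∩ (Rᶜ).neighborSet p) \ U₂).Nonempty :=
        Set.nonempty_of_ncard_ne_zero (by omega)
      obtain ⟨q, ⟨⟨hqNb, hq2⟩, hpq⟩, hqU⟩ := hQne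
      exact ⟨p, q, hp1, hpU, hq2, hqU, hpNb, hqNb, (hpq : (Rᶜ).Adj p q)⟩
  -- greedy construction of a fan's pairs
  have build : ∀ m : ℕ, ∀ w ∈ A,
      2 * k ≤ ((Rᶜ).neighborSet w ∩ S₁).ncard → 2 * k ≤ ((Rᶜ).neighborSet w ∩ S₂).ncard →
      ∀ U₁ U₂ : Set (Fin N), (U₁.ncard : ℤ) ≤ 2 * k - m → (U₂.ncard : ℤ) ≤ 2 * k - m →
      (1 : ℤ) ≤ 2 * k - m →
      ∃ p q : Fin m → Fin N,
        (∀ i, p i ∈ S₁ ∧ p i ∉ U₁ ∧ (Rᶜ).Adj w (p i)) ∧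
        (∀ i, q i ∈ S₂ ∧ q i ∉ U₂ ∧ (Rᶜ).Adj w (q i)) ∧
        (∀ i, (Rᶜ).Adj (p i) (q i)) ∧ Function.Injective p ∧ Function.Injective q := by
    intro m
    induction m with
    | zero =>
      intro w _ _ _ U₁ U₂ _ _ _
      exact ⟨fun i => i.elim0, fun i => i.elim0, fun i => i.elim0, fun i => i.elim0,
        fun i => i.elim0, fun i => i.elim0, fun i => i.elim0⟩
    | succ m ih =>
      intro w hwA hw1 hw2 U₁ U₂ hU₁ hU₂ hmk
      have hm1 : ((m : ℤ) + 1) = ((m + 1 : ℕ) : ℤ) := by push_cast; ring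
      obtain ⟨p₀, q₀, hp₀S, hp₀U, hq₀S, hq₀U, hwp₀, hwq₀, hpq₀⟩ :=
        step w hwA U₁ U₂ (by push_cast at hU₁ ⊢; omega) (by push_cast at hU₂ ⊢; omega) hw1 hw2
      have hi₁ : ((insert p₀ U₁).ncard : ℤ) ≤ 2 * k - m := by
        have := Set.ncard_insert_le p₀ U₁
        push_cast at hU₁ ⊢
        omega
      have hi₂ : ((insert q₀ U₂).ncard : ℤ) ≤ 2 * k - m := by
        have := Set.ncard_insert_le q₀ U₂
        push_cast at hU₂ ⊢
        omega
      obtain ⟨p, q, hp, hq, hpq, hinjp, hinjq⟩ :=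
        ih w hwA hw1 hw2 (insert p₀ U₁) (insert q₀ U₂) hi₁ hi₂
          (by push_cast at hmk ⊢; omega)
      refine ⟨Fin.cons p₀ p, Fin.cons q₀ q, ?_, ?_, ?_, ?_, ?_⟩
      · intro i
        refine Fin.cases ?_ ?_ i
        · simpa using ⟨hp₀S, hp₀U, hwp₀⟩
        · intro i'
          have h := hp i'
          simp only [Fin.cons_succ]
          exact ⟨h.1, fun hmem => h.2.1 (Set.mem_insert_of_mem _ hmem), h.2.2⟩
      · intro i
        refine Fin.cases ?_ ?_ i
        · simpa using ⟨hq₀S, hq₀U, hwq₀⟩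
        · intro i'
          have h := hq i'
          simp only [Fin.cons_succ]
          exact ⟨h.1, fun hmem => h.2.1 (Set.mem_insert_of_mem _ hmem), h.2.2⟩
      · intro i
        refine Fin.cases ?_ ?_ i
        · simpa using hpq₀
        · intro i'
          simpa only [Fin.cons_succ] using hpq i'
      · intro i i' h
        rcases Fin.eq_zero_or_eq_succ i with rfl | ⟨i0, rfl⟩ <;>
          rcases Fin.eq_zero_or_eq_succ i' with rfl | ⟨i1, rfl⟩
        · rfl
        · simp only [Fin.cons_zero, Fin.cons_succ] at h
          exact absurd (Set.mem_insert _ _) (h ▸ (hp i1).2.1)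
        · simp only [Fin.cons_zero, Fin.cons_succ] at h
          exact absurd (Set.mem_insert _ _) (h.symm ▸ (hp i0).2.1)
        · simp only [Fin.cons_succ] at h
          exact congrArg Fin.succ (hinjp h)
      · intro i i' h
        rcases Fin.eq_zero_or_eq_succ i with rfl | ⟨i0, rfl⟩ <;>
          rcases Fin.eq_zero_or_eq_succ i' with rfl | ⟨i1, rfl⟩
        · rfl
        · simp only [Fin.cons_zero, Fin.cons_succ] at h
          exact absurd (Set.mem_insert _ _) (h ▸ (hq i1).2.1)
        · simp only [Fin.cons_zero, Fin.cons_succ] at h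
          exact absurd (Set.mem_insert _ _) (h.symm ▸ (hq i0).2.1)
        · simp only [Fin.cons_succ] at h
          exact congrArg Fin.succ (hinjq h)
  -- build the two new fans: first b's fan, then a's avoiding b's vertices
  have hkk : (1 : ℤ) ≤ 2 * (k : ℤ) - (k : ℕ) := by push_cast; omega
  obtain ⟨pb, qb, hpb, hqb, hpqb, hinjpb, hinjqb⟩ :=
    build k b hbA hb1 hb2 ∅ ∅ (by simp [Set.ncard_empty]; push_cast; omega)
      (by simp [Set.ncard_empty]; push_cast; omega) hkk
  have hrangep : ((Set.range pb).ncard : ℤ) ≤ 2 * (k : ℤ) - (k : ℕ) := by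
    have h1 : (Set.range pb).ncard ≤ (Set.univ : Set (Fin k)).ncard := by
      rw [← Set.image_univ]; exact Set.ncard_image_le (Set.toFinite _)
    have h2 : (Set.univ : Set (Fin k)).ncard = k := by simp [Set.ncard_univ]
    push_cast; omega
  have hrangeq : ((Set.range qb).ncard : ℤ) ≤ 2 * (k : ℤ) - (k : ℕ) := by
    have h1 : (Set.range qb).ncard ≤ (Set.univ : Set (Fin k)).ncard := by
      rw [← Set.image_univ]; exact Set.ncard_image_le (Set.toFinite _)
    have h2 : (Set.univ : Set (Fin k)).ncard = k := by simp [Set.ncard_univ]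
    push_cast; omega
  obtain ⟨pa, qa, hpa, hqa, hpqa, hinjpa, hinjqa⟩ :=
    build k a haA ha1 ha2 (Set.range pb) (Set.range qb) hrangep hrangeq hkk
  -- injectivity facts
  have hvainj : Function.Injective (fanVert a pa qa) :=
    fanVert_inj a pa qa S₁ S₂ (fun i => (hpa i).1) (fun i => (hqa i).1)
      (fun hmem => hnotA₁ _ hmem haA) (fun hmem => hnotA₂ _ hmem haA) hSdisj hinjpa hinjqa
  have hvbinj : Function.Injective (fanVert b pb qb) :=
    fanVert_inj b pb qb S₁ S₂ (fun i => (hpb i).1) (fun i => (hqb i).1)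
      (fun hmem => hnotA₁ _ hmem hbA) (fun hmem => hnotA₂ _ hmem hbA) hSdisj hinjpb hinjqb
  have hva_ne_vb : ∀ x y, fanVert a pa qa x ≠ fanVert b pb qb y := by
    intro x y h
    rcases fanVert_cases a pa qa x with hx | ⟨i, hx⟩ | ⟨i, hx⟩ <;>
      rcases fanVert_cases b pb qb y with hy | ⟨i', hy⟩ | ⟨i', hy⟩ <;> rw [hx, hy] at h
    · exact hab h
    · exact hnotA₁ _ (hpb i').1 (h ▸ haA)
    · exact hnotA₂ _ (hqb i').1 (h ▸ haA)
    · exact hnotA₁ _ (hpa i).1 (h.symm ▸ hbA)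
    · exact (hpa i).2.1 ⟨i', h.symm⟩
    · exact Set.disjoint_left.1 hSdisj (hpa i).1 (by rw [h]; exact (hqb i').1)
    · exact hnotA₂ _ (hqa i).1 (h.symm ▸ hbA)
    · exact Set.disjoint_left.1 hSdisj (by rw [h]; exact (hpb i').1) (hqa i).1
    · exact (hqa i).2.1 ⟨i', h.symm⟩
  have hva_ne_f : ∀ x (i' : Fin (t - 1)) y, i' ≠ j → fanVert a pa qa x ≠ f (i', y) := by
    intro x i' y hij h
    rcases fanVert_cases a pa qa x with hx | ⟨i, hx⟩ | ⟨i, hx⟩ <;> rw [hx] at h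
    · rw [hax] at h
      exact hij (congrArg Prod.fst (hf_inj h)).symm
    · exact hnotA₁ _ (hpa i).1 (by rw [h, hA]; exact Set.mem_range_self _)
    · exact hnotA₂ _ (hqa i).1 (by rw [h, hA]; exact Set.mem_range_self _)
  have hvb_ne_f : ∀ x (i' : Fin (t - 1)) y, i' ≠ j → fanVert b pb qb x ≠ f (i', y) := by
    intro x i' y hij h
    rcases fanVert_cases b pb qb x with hx | ⟨i, hx⟩ | ⟨i, hx⟩ <;> rw [hx] at h
    · rw [hbx] at h
      exact hij (congrArg Prod.fst (hf_inj h)).symm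
    · exact hnotA₁ _ (hpb i).1 (by rw [h, hA]; exact Set.mem_range_self _)
    · exact hnotA₂ _ (hqb i).1 (by rw [h, hA]; exact Set.mem_range_self _)
  -- assemble the blue copy of t F_k, contradiction
  apply hblue
  refine ⟨glueMap (t := t) (fanVert a pa qa) (fanVert b pb qb) j f, ?_, ?_⟩
  · rintro ⟨i, x⟩ ⟨i', y⟩ h
    rw [Prod.mk.injEq]
    have h' : (if c : (i : ℕ) < t - 1 then
        (if (⟨i, c⟩ : Fin (t - 1)) = j then fanVert a pa qa x else f (⟨i, c⟩, x))
        else fanVert b pb qb x) =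
        (if c : (i' : ℕ) < t - 1 then
        (if (⟨i', c⟩ : Fin (t - 1)) = j then fanVert a pa qa y else f (⟨i', c⟩, y))
        else fanVert b pb qb y) := h
    clear h
    by_cases c1 : (i : ℕ) < t - 1
    · rw [dif_pos c1] at h'
      by_cases c2 : (⟨i, c1⟩ : Fin (t - 1)) = j
      · rw [if_pos c2] at h'
        by_cases c3 : (i' : ℕ) < t - 1
        · rw [dif_pos c3] at h'
          by_cases c4 : (⟨i', c3⟩ : Fin (t - 1)) = j
          · rw [if_pos c4] at h'
            have e1 := congrArg Fin.val c2
            have e2 := congrArg Fin.val c4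
            simp only at e1 e2
            exact ⟨Fin.ext (by omega), hvainj h'⟩
          · rw [if_neg c4] at h'
            exact absurd h' (hva_ne_f x _ y c4)
        · rw [dif_neg c3] at h'
          exact absurd h' (hva_ne_vb x y)
      · rw [if_neg c2] at h'
        by_cases c3 : (i' : ℕ) < t - 1
        · rw [dif_pos c3] at h'
          by_cases c4 : (⟨i', c3⟩ : Fin (t - 1)) = j
          · rw [if_pos c4] at h'
            exact absurd h'.symm (hva_ne_f y _ x c2)
          · rw [if_neg c4] at h'
            have h5 := hf_inj h'
            have e1 := congrArg Prod.fst h5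
            have e2 := congrArg Prod.snd h5
            simp only at e1 e2
            have e3 := congrArg Fin.val e1
            simp only at e3
            exact ⟨Fin.ext e3, e2⟩
        · rw [dif_neg c3] at h'
          exact absurd h'.symm (hvb_ne_f y _ x c2)
    · rw [dif_neg c1] at h'
      by_cases c3 : (i' : ℕ) < t - 1
      · rw [dif_pos c3] at h'
        by_cases c4 : (⟨i', c3⟩ : Fin (t - 1)) = j
        · rw [if_pos c4] at h'
          exact absurd h'.symm (hva_ne_vb y x)
        · rw [if_neg c4] at h'
          exact absurd h' (hvb_ne_f x _ y c4)
      · rw [dif_neg c3] at h'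
        have hi := i.isLt
        have hi' := i'.isLt
        exact ⟨Fin.ext (by omega), hvbinj h'⟩
  · rintro ⟨i, x⟩ ⟨i', y⟩ hadj
    obtain ⟨hii, hfan⟩ := hadj
    simp only at hii
    subst hii
    show (Rᶜ).Adj
      (if c : (i : ℕ) < t - 1 then
        (if (⟨i, c⟩ : Fin (t - 1)) = j then fanVert a pa qa x else f (⟨i, c⟩, x))
        else fanVert b pb qb x)
      (if c : (i : ℕ) < t - 1 then
        (if (⟨i, c⟩ : Fin (t - 1)) = j then fanVert a pa qa y else f (⟨i, c⟩, y))
        else fanVert b pb qb y)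
    have hfan' : (fan k).Adj x y := hfan
    by_cases c1 : (i : ℕ) < t - 1
    · by_cases c2 : (⟨i, c1⟩ : Fin (t - 1)) = j
      · simp only [dif_pos c1, if_pos c2]
        exact fanVert_adj (Rᶜ) a pa qa (fun i => (hpa i).2.2) (fun i => (hqa i).2.2) hpqa hfan'
      · simp only [dif_pos c1, if_neg c2]
        exact hf_adj ⟨rfl, hfan'⟩
    · simp only [dif_neg c1]
      exact fanVert_adj (Rᶜ) b pb qb (fun i => (hpb i).2.2) (fun i => (hqb i).2.2) hpqb hfan'
end
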